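/- arXiv:1611.08140 — 3 statements merged into one kernel-verified Lean document; each statement's English description precedes it below -/
import Mathlib

section
/- Assume κ is strongly inaccessible. Then add(𝓜_κ) = min{𝔟_κ, cov(𝓜_κ)} and cof(𝓜_κ) = max{𝔡_κ, non(𝓜_κ)}. -/
namespace GenCichon

noncomputable section

open Cardinal Set Ordinal

variable (κ : Cardinal.{0})

/-- The ordinals below `κ`, i.e. the cardinal `κ` viewed as a set of ordinals. -/
abbrev Idx : Type 1 := ↥(Set.Iio κ.ord)

/-- The generalized Cantor space `2^κ`. -/
abbrev GenCantor : Type 1 := Idx κ → Bool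

/-- The generalized Baire space `κ^κ`. -/
abbrev GenBaire : Type 1 := Idx κ → Idx κ

/-- The basic open (cylinder) set `[σ]` determined by the element `σ` of `2^{<κ}`
with domain `[0, δ)` (values of `σ` at or above `δ` are irrelevant). -/
def cyl (δ : Ordinal) (σ : Ordinal → Bool) : Set (GenCantor κ) :=
  { x | ∀ β : Idx κ, β.1 < δ → x β = σ β.1 }

/-- `A ⊆ 2^κ` is nowhere dense: every basic open set `[σ]`, `σ ∈ 2^{<κ}`, has a
basic open refinement `[σ'] ⊆ [σ]` disjoint from `A`. -/
def IsNwd (A : Set (GenCantor κ)) : Prop :=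
  ∀ δ < κ.ord, ∀ σ : Ordinal → Bool, ∃ δ', δ ≤ δ' ∧ δ' < κ.ord ∧
    ∃ σ' : Ordinal → Bool, (∀ β < δ, σ' β = σ β) ∧ cyl κ δ' σ' ∩ A = ∅

/-- `A ⊆ 2^κ` is `κ`-meager: a union of `κ` many nowhere dense sets. -/
def IsKMeager (A : Set (GenCantor κ)) : Prop :=
  ∃ B : Idx κ → Set (GenCantor κ), (∀ i, IsNwd κ (B i)) ∧ A = ⋃ i, B i

/-- The covering number of the `κ`-meager ideal. -/
def covM : Cardinal.{1} :=
  sInf { c : Cardinal.{1} | ∃ J : Set (Set (GenCantor κ)),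
    (∀ A ∈ J, IsKMeager κ A) ∧ ⋃₀ J = Set.univ ∧ c = #J }

/-- The uniformity number of the `κ`-meager ideal. -/
def nonM : Cardinal.{1} :=
  sInf { c : Cardinal.{1} | ∃ X : Set (GenCantor κ), ¬ IsKMeager κ X ∧ c = #X }

/-- The additivity number of the `κ`-meager ideal. -/
def addM : Cardinal.{1} :=
  sInf { c : Cardinal.{1} | ∃ J : Set (Set (GenCantor κ)),
    (∀ A ∈ J, IsKMeager κ A) ∧ ¬ IsKMeager κ (⋃₀ J) ∧ c = #J }

/-- The cofinality number of the `κ`-meager ideal. -/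
def cofM : Cardinal.{1} :=
  sInf { c : Cardinal.{1} | ∃ J : Set (Set (GenCantor κ)),
    (∀ A ∈ J, IsKMeager κ A) ∧ (∀ A, IsKMeager κ A → ∃ B ∈ J, A ⊆ B) ∧ c = #J }

/-- `g` eventually dominates `f` (`f <* g`). -/
def EvDom (f g : GenBaire κ) : Prop :=
  ∃ α : Idx κ, ∀ β : Idx κ, α < β → f β < g β

/-- The unbounding number `𝔟_κ`. -/
def bK : Cardinal.{1} :=
  sInf { c : Cardinal.{1} | ∃ F : Set (GenBaire κ),
    (∀ g : GenBaire κ, ∃ f ∈ F, ¬ EvDom κ f g) ∧ c = #F }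

/-- The dominating number `𝔡_κ`. -/
def dK : Cardinal.{1} :=
  sInf { c : Cardinal.{1} | ∃ F : Set (GenBaire κ),
    (∀ g : GenBaire κ, ∃ f ∈ F, EvDom κ g f) ∧ c = #F }

/-- `f` and `g` are eventually different (`f ≠* g`). -/
def EvDiff (f g : GenBaire κ) : Prop :=
  #{ α : Idx κ | f α = g α } < Cardinal.lift.{1} κ

/-- `𝔟_κ(≠*)`: least size of a family such that every `g` is cofinally matching
with some member of it. -/
def bNeq : Cardinal.{1} :=
  sInf { c : Cardinal.{1} | ∃ F : Set (GenBaire κ),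
    (∀ g : GenBaire κ, ∃ f ∈ F, ¬ EvDiff κ f g) ∧ c = #F }

/-- `𝔡_κ(≠*)`: least size of a family such that every `g` is eventually different
from some member of it. -/
def dNeq : Cardinal.{1} :=
  sInf { c : Cardinal.{1} | ∃ F : Set (GenBaire κ),
    (∀ g : GenBaire κ, ∃ f ∈ F, EvDiff κ f g) ∧ c = #F }

/-- An interval partition of `κ`: a strictly increasing continuous sequence
`(pts α : α < κ)` of ordinals below `κ` with `pts 0 = 0`; the `α`-th interval is
`[pts α, pts (α+1))`.  (Values at or above `κ` are normalized to `0`, so that an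
interval partition is determined by its restriction below `κ`.) -/
structure IntervalPartition where
  pts : Ordinal → Ordinal
  zero : pts 0 = 0
  lt_ord : ∀ α < κ.ord, pts α < κ.ord
  strictMono : ∀ α β : Ordinal, α < β → β < κ.ord → pts α < pts β
  isCont : ∀ δ < κ.ord, Order.IsSuccLimit δ → pts δ = ⨆ β : ↥(Set.Iio δ), pts β.1
  eq_zero_of_le : ∀ α, κ.ord ≤ α → pts α = 0

/-- The `β`-th interval of `J` is included in the `α`-th interval of `I`. -/
def SubIntv (J : IntervalPartition κ) (β : Ordinal) (I : IntervalPartition κ)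
    (α : Ordinal) : Prop :=
  I.pts α ≤ J.pts β ∧ J.pts (β + 1) ≤ I.pts (α + 1)

/-- `I` dominates `J` (`J ≤* I`): from some point on, every interval of `I`
contains an interval of `J`. -/
def IPDom (J I : IntervalPartition κ) : Prop :=
  ∃ γ < κ.ord, ∀ α, γ < α → α < κ.ord → ∃ β < κ.ord, SubIntv κ J β I α

/-- `y` matches the `κ`-chopped function `(x, I)`: `y` and `x` agree on cofinally
many intervals of `I`. -/
def Matches (y x : GenCantor κ) (I : IntervalPartition κ) : Prop :=
  ∀ γ < κ.ord, ∃ α, γ ≤ α ∧ α < κ.ord ∧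
    ∀ β : Idx κ, I.pts α ≤ β.1 → β.1 < I.pts (α + 1) → y β = x β

/-- The set of elements of `2^κ` matching the `κ`-chopped function `(x, I)`. -/
def MatchSet (x : GenCantor κ) (I : IntervalPartition κ) : Set (GenCantor κ) :=
  { y | Matches κ y x I }

/-- `h ∈ κ^κ` tends to `κ`: `lim_{α → κ} h(α) = κ`. -/
def TendsToTop (h : GenBaire κ) : Prop :=
  ∀ γ : Idx κ, ∃ α : Idx κ, ∀ β : Idx κ, α ≤ β → γ ≤ h β

/-- `φ` is an `h`-slalom: `φ(α)` is a subset of `κ` of cardinality `|h(α)|`. -/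
def IsSlalom (h : GenBaire κ) (φ : Idx κ → Set (Idx κ)) : Prop :=
  ∀ α : Idx κ, #(φ α) = Cardinal.lift.{1} (h α).1.card

/-- The (total) slalom `φ` localizes `f` (`f ∈* φ`). -/
def Localizes (φ : Idx κ → Set (Idx κ)) (f : GenBaire κ) : Prop :=
  #{ α : Idx κ | f α ∉ φ α } < Cardinal.lift.{1} κ

/-- `𝔟_h(∈*)`. -/
def bLoc (h : GenBaire κ) : Cardinal.{1} :=
  sInf { c : Cardinal.{1} | ∃ F : Set (GenBaire κ),
    (∀ φ : Idx κ → Set (Idx κ), IsSlalom κ h φ → ∃ f ∈ F, ¬ Localizes κ φ f) ∧ c = #F }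

/-- `𝔡_h(∈*)`. -/
def dLoc (h : GenBaire κ) : Cardinal.{1} :=
  sInf { c : Cardinal.{1} | ∃ Φ : Set (Idx κ → Set (Idx κ)),
    (∀ φ ∈ Φ, IsSlalom κ h φ) ∧ (∀ f : GenBaire κ, ∃ φ ∈ Φ, Localizes κ φ f) ∧ c = #Φ }

/-- A partial `h`-slalom: a slalom whose domain is a subset of `κ` of cardinality `κ`.
(The values outside the domain are normalized to `∅`.) -/
structure PartialSlalom (h : GenBaire κ) where
  dom : Set (Idx κ)
  dom_card : #dom = Cardinal.lift.{1} κ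
  fn : Idx κ → Set (Idx κ)
  fn_card : ∀ α ∈ dom, #(fn α) = Cardinal.lift.{1} (h α).1.card
  eq_empty_of_not_mem : ∀ α ∉ dom, fn α = ∅

/-- The partial slalom `φ` localizes `f` (`f ∈* φ`). -/
def PLocalizes {h : GenBaire κ} (φ : PartialSlalom κ h) (f : GenBaire κ) : Prop :=
  #{ α : Idx κ | α ∈ φ.dom ∧ f α ∉ φ.fn α } < Cardinal.lift.{1} κ

/-- `𝔟_h(p∈*)`. -/
def bPLoc (h : GenBaire κ) : Cardinal.{1} :=
  sInf { c : Cardinal.{1} | ∃ F : Set (GenBaire κ),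
    (∀ φ : PartialSlalom κ h, ∃ f ∈ F, ¬ PLocalizes κ φ f) ∧ c = #F }

/-- `𝔡_h(p∈*)`. -/
def dPLoc (h : GenBaire κ) : Cardinal.{1} :=
  sInf { c : Cardinal.{1} | ∃ Φ : Set (PartialSlalom κ h),
    (∀ f : GenBaire κ, ∃ φ ∈ Φ, PLocalizes κ φ f) ∧ c = #Φ }

/-- `X ⊆ 2^κ` is open in the `<κ`-box topology. -/
def IsOpenK (X : Set (GenCantor κ)) : Prop :=
  ∀ x ∈ X, ∃ δ < κ.ord, { y : GenCantor κ | ∀ β : Idx κ, β.1 < δ → y β = x β } ⊆ X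

/-- `X ⊆ 2^κ` is dense: it meets every basic open set. -/
def IsDenseK (X : Set (GenCantor κ)) : Prop :=
  ∀ δ < κ.ord, ∀ σ : Ordinal → Bool, (cyl κ δ σ ∩ X).Nonempty

/-- Coordinatewise addition modulo 2 on `2^κ`. -/
def addMod2 (x y : GenCantor κ) : GenCantor κ := fun α => Bool.xor (x α) (y α)

/-- The identification of `σ ∈ 2^{<κ}` (with domain `[0, δ)`) with the element of
`2^κ` extending `σ` by `0`'s. -/
def extendZero (δ : Ordinal) (σ : Ordinal → Bool) : GenCantor κ :=
  fun α => if α.1 < δ then σ α.1 else false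

end

end GenCichon

namespace GenCichon

open Cardinal Set Ordinal
open Cardinal Set Ordinal

/-- A condition: a length and a bit-assignment (values beyond length are junk). -/
abbrev Cond : Type 1 := Ordinal.{0} × (Ordinal.{0} → Bool)

/-- Extension of conditions. -/
def CExt (c d : Cond) : Prop := c.1 ≤ d.1 ∧ ∀ β < c.1, d.2 β = c.2 β

lemma CExt.rfl {c : Cond} : CExt c c := ⟨le_rfl, fun _ _ => Eq.refl _⟩

lemma CExt.trans {a b c : Cond} (h1 : CExt a b) (h2 : CExt b c) : CExt a c :=
  ⟨h1.1.trans h2.1, fun β hβ => (h2.2 β (hβ.trans_le h1.1)).trans (h1.2 β hβ)⟩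

lemma iSup_Iio_lt_ord {κ : Cardinal.{0}} (hreg : κ.IsRegular) {ℓ : Ordinal.{0}}
    (hℓ : ℓ < κ.ord) (f : ↥(Set.Iio ℓ) → Ordinal.{0}) (hf : ∀ ζ, f ζ < κ.ord) :
    (⨆ ζ, f ζ) < κ.ord := by
  have e : ℓ.ToType ≃ ↥(Set.Iio ℓ) := Ordinal.ToType.mk.symm.toEquiv
  have hr : Set.range (fun x : ℓ.ToType => f (e x)) = Set.range f := by
    ext z
    constructor
    · rintro ⟨x, rfl⟩; exact ⟨e x, rfl⟩
    · rintro ⟨y, rfl⟩; exact ⟨e.symm y, by simp⟩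
  have : (⨆ ζ, f ζ) = ⨆ x : ℓ.ToType, f (e x) := by
    rw [iSup, iSup, hr]
  rw [this]
  refine Ordinal.iSup_lt_ord ?_ fun x => hf _
  rw [mk_toType, hreg.cof_eq]
  exact Cardinal.lt_ord.mp hℓ

lemma bddAbove_range_Iio {ℓ : Ordinal.{0}} (f : ↥(Set.Iio ℓ) → Ordinal.{0}) :
    BddAbove (Set.range f) :=
  Ordinal.bddAbove_of_small

open scoped Classical in
noncomputable def climit (ℓ : Ordinal.{0}) (f : ∀ ζ < ℓ, Cond) : Cond :=
  (⨆ ζ : ↥(Set.Iio ℓ), (f ζ.1 ζ.2).1,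
   fun β => if h : ∃ ζ : ↥(Set.Iio ℓ), β < (f ζ.1 ζ.2).1
     then (f h.choose.1 h.choose.2).2 β else false)

lemma climit_ext {ℓ : Ordinal.{0}} (f : ∀ ζ < ℓ, Cond)
    (hcoh : ∀ ζ ξ (hζ : ζ < ℓ) (hξ : ξ < ℓ), ζ ≤ ξ → CExt (f ζ hζ) (f ξ hξ)) :
    ∀ ζ (hζ : ζ < ℓ), CExt (f ζ hζ) (climit ℓ f) := by
  intro ζ hζ
  constructor
  · exact le_ciSup (bddAbove_range_Iio _) (⟨ζ, hζ⟩ : ↥(Set.Iio ℓ))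
  · intro β hβ
    have hex : ∃ ζ' : ↥(Set.Iio ℓ), β < (f ζ'.1 ζ'.2).1 := ⟨⟨ζ, hζ⟩, hβ⟩
    show (climit ℓ f).2 β = _
    simp only [climit]
    rw [dif_pos hex]
    rcases le_total ζ hex.choose.1 with h | h
    · exact (hcoh ζ hex.choose.1 hζ hex.choose.2 h).2 β hβ
    · exact ((hcoh hex.choose.1 ζ hex.choose.2 hζ h).2 β hex.choose_spec).symm

/-- Transfinite fusion chain of conditions. -/
noncomputable def chain (init : Cond) (D : Ordinal.{0} → Cond → Cond) : Ordinal.{0} → Cond :=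
  fun o => Ordinal.limitRecOn (motive := fun _ => Cond) o init (fun ζ ih => D ζ ih)
    (fun ℓ _ ih => climit ℓ (fun ζ hζ => ih ζ hζ))

@[simp] lemma chain_zero (init D) : chain init D 0 = init := Ordinal.limitRecOn_zero ..

lemma chain_succ (init D) (ζ : Ordinal.{0}) :
    chain init D (ζ + 1) = D ζ (chain init D ζ) := by
  show Ordinal.limitRecOn (motive := fun _ => Cond) _ _ _ _ = _
  rw [Ordinal.limitRecOn_add_one]
  rfl

lemma chain_limit (init D) {ℓ : Ordinal.{0}} (hℓ : Order.IsSuccLimit ℓ) :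
    chain init D ℓ = climit ℓ (fun ζ _ => chain init D ζ) := by
  show Ordinal.limitRecOn (motive := fun _ => Cond) _ _ _ _ = _
  rw [Ordinal.limitRecOn_limit (h := hℓ)]
  rfl


section ChainLemmas
variable {init : Cond} {D : Ordinal.{0} → Cond → Cond}

lemma chain_mono (hD : ∀ ζ c, CExt c (D ζ c)) :
    ∀ ξ ζ, ζ ≤ ξ → CExt (chain init D ζ) (chain init D ξ) := by
  intro ξ
  induction ξ using Ordinal.limitRecOn with
  | zero =>
    intro ζ hζ
    rw [nonpos_iff_eq_zero.mp hζ]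
    exact CExt.rfl
  | add_one ξ ih =>
    intro ζ hζ
    rcases Order.le_succ_iff_eq_or_le.mp hζ with rfl | hζ
    · exact CExt.rfl
    · refine (ih ζ hζ).trans ?_
      rw [chain_succ]
      exact hD _ _
  | limit ℓ hℓ ih =>
    intro ζ hζ
    rcases eq_or_lt_of_le hζ with rfl | hζ
    · exact CExt.rfl
    · rw [chain_limit init D hℓ]
      exact climit_ext _ (fun a b ha hb hab => by
        rcases eq_or_lt_of_le hab with rfl | hab
        · exact CExt.rfl
        · exact ih b hb a hab.le) ζ hζ

lemma chain_fst_ge (hD : ∀ ζ c, c.1 + 1 ≤ (D ζ c).1) :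
    ∀ ξ, ξ ≤ (chain init D ξ).1 := by
  intro ξ
  induction ξ using Ordinal.limitRecOn with
  | zero => exact zero_le
  | add_one ξ ih =>
    rw [chain_succ]
    calc Order.succ ξ = ξ + 1 := (Ordinal.add_one_eq_succ ξ).symm
    _ ≤ (chain init D ξ).1 + 1 := by
        exact add_le_add_left ih 1
    _ ≤ _ := hD _ _
  | limit ℓ hℓ ih =>
    rw [chain_limit init D hℓ]
    rw [(hℓ.le_iff_forall_le : ℓ ≤ _ ↔ _)]
    intro x hx
    calc x ≤ (chain init D x).1 := ih x hx
    _ ≤ _ := le_ciSup (bddAbove_range_Iio _) (⟨x, hx⟩ : ↥(Set.Iio ℓ))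

lemma chain_fst_lt_ord {κ : Cardinal.{0}} (hreg : κ.IsRegular)
    (hinit : init.1 < κ.ord) (hD : ∀ ζ c, c.1 < κ.ord → (D ζ c).1 < κ.ord) :
    ∀ ξ, ξ < κ.ord → (chain init D ξ).1 < κ.ord := by
  intro ξ
  induction ξ using Ordinal.limitRecOn with
  | zero => intro _; rw [chain_zero]; exact hinit
  | add_one ξ ih =>
    intro hξ
    rw [chain_succ]
    exact hD _ _ (ih ((Order.lt_succ ξ).trans hξ))
  | limit ℓ hℓ ih =>
    intro hℓκ
    rw [chain_limit init D hℓ]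
    exact iSup_Iio_lt_ord hreg hℓκ _ (fun ζ => ih ζ.1 ζ.2 (ζ.2.trans hℓκ))

end ChainLemmas


section IPLemmas
variable {κ : Cardinal.{0}}

lemma ord_pos (hκ : ℵ₀ ≤ κ) : (0 : Ordinal.{0}) < κ.ord :=
  (Cardinal.isSuccLimit_ord hκ).pos

lemma succ_lt_ord (hκ : ℵ₀ ≤ κ) {α : Ordinal.{0}} (hα : α < κ.ord) : α + 1 < κ.ord := by
  rw [Ordinal.add_one_eq_succ]
  exact (Cardinal.isSuccLimit_ord hκ).succ_lt hα

lemma lt_add_one' (a : Ordinal.{0}) : a < a + 1 := by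
  rw [Ordinal.add_one_eq_succ]; exact Order.lt_succ a

namespace IntervalPartition

lemma pts_mono (I : IntervalPartition κ) {α β : Ordinal.{0}} (hab : α ≤ β)
    (hβ : β < κ.ord) : I.pts α ≤ I.pts β := by
  rcases eq_or_lt_of_le hab with rfl | h
  · exact le_rfl
  · exact (I.strictMono α β h hβ).le

lemma le_pts (I : IntervalPartition κ) : ∀ α, α < κ.ord → α ≤ I.pts α := by
  intro α
  induction α using Ordinal.induction with
  | h α ih =>
    intro hα
    by_contra hcon
    have hlt : I.pts α < α := lt_of_not_ge hcon
    have h1 := ih (I.pts α) hlt (I.lt_ord α hα)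
    exact absurd (h1.trans_lt (I.strictMono _ _ hlt hα)) (lt_irrefl _)

lemma pts_lt_iff (I : IntervalPartition κ) {α β : Ordinal.{0}}
    (hα : α < κ.ord) (hβ : β < κ.ord) : I.pts α < I.pts β ↔ α < β := by
  constructor
  · intro h
    by_contra hcon
    exact absurd (I.pts_mono (not_lt.mp hcon) hα) (not_le.mpr h)
  · intro h
    exact I.strictMono α β h hβ

lemma exists_interval (hκ : ℵ₀ ≤ κ) (I : IntervalPartition κ) {ξ : Ordinal.{0}}
    (hξ : ξ < κ.ord) : ∃ β, β < κ.ord ∧ I.pts β ≤ ξ ∧ ξ < I.pts (β + 1) := by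
  set T : Set Ordinal.{0} := {b | b ≤ ξ ∧ I.pts b ≤ ξ} with hT
  have h0T : (0 : Ordinal.{0}) ∈ T := ⟨zero_le, by rw [I.zero]; exact zero_le⟩
  have hne : T.Nonempty := ⟨0, h0T⟩
  have hbdd : BddAbove T := ⟨ξ, fun t ht => ht.1⟩
  set β := sSup T with hβ
  have hβξ : β ≤ ξ := csSup_le hne (fun t ht => ht.1)
  have hβκ : β < κ.ord := lt_of_le_of_lt hβξ hξ
  have hmem : β ∈ T := by
    by_contra hmem
    rcases Ordinal.zero_or_succ_or_isSuccLimit β with h0 | ⟨b, hb⟩ | hlim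
    · rw [hβ] at h0
      rw [hT] at hmem
      rw [hβ, h0] at hmem
      exact hmem h0T
    · have hbβ : b < β := by rw [← hb]; exact Order.lt_succ b
      obtain ⟨t, htT, hbt⟩ := exists_lt_of_lt_csSup hne hbβ
      have htβ : t ≤ β := le_csSup hbdd htT
      have heq : t = β := le_antisymm htβ (hb ▸ Order.succ_le_of_lt hbt)
      exact hmem (heq ▸ htT)
    · have hc := I.isCont β hβκ hlim
      have hle : I.pts β ≤ ξ := by
        rw [hc]
        have hneI : Nonempty ↥(Set.Iio β) := ⟨⟨0, hlim.pos⟩⟩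
        refine ciSup_le (fun b => ?_)
        obtain ⟨t, htT, hbt⟩ := exists_lt_of_lt_csSup hne b.2
        have htκ : t < κ.ord := lt_of_le_of_lt htT.1 hξ
        exact le_trans (I.strictMono _ _ hbt htκ).le htT.2
      exact hmem ⟨hβξ, hle⟩
  refine ⟨β, hβκ, hmem.2, ?_⟩
  by_contra hcon
  have h1 : I.pts (β + 1) ≤ ξ := not_lt.mp hcon
  have h2 : β + 1 < κ.ord := succ_lt_ord hκ hβκ
  have h3 : β + 1 ≤ ξ := le_trans (I.le_pts _ h2) h1
  have h4 : β + 1 ≤ β := le_csSup hbdd ⟨h3, h1⟩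
  exact absurd (lt_of_lt_of_le (lt_add_one' β) h4) (lt_irrefl β)

end IntervalPartition

lemma chain_fst_mono {init : Cond} {D : Ordinal.{0} → Cond → Cond}
    (hD : ∀ ζ c, c.1 ≤ (D ζ c).1) :
    ∀ ξ ζ, ζ ≤ ξ → (chain init D ζ).1 ≤ (chain init D ξ).1 := by
  intro ξ
  induction ξ using Ordinal.limitRecOn with
  | zero =>
    intro ζ hζ
    rw [nonpos_iff_eq_zero.mp hζ]
  | add_one ξ ih =>
    intro ζ hζ
    rcases Order.le_succ_iff_eq_or_le.mp hζ with rfl | hζ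
    · exact le_rfl
    · refine (ih ζ hζ).trans ?_
      rw [chain_succ]
      exact hD _ _
  | limit ℓ hℓ ih =>
    intro ζ hζ
    rcases eq_or_lt_of_le hζ with rfl | hζ
    · exact le_rfl
    · rw [chain_limit init D hℓ]
      exact le_ciSup (bddAbove_range_Iio _) (⟨ζ, hζ⟩ : ↥(Set.Iio ℓ))

/-- The canonical starting condition. -/
def initC : Cond := ((0 : Ordinal.{0}), fun _ => false)

/-- Build an interval partition from a fusion chain. -/
noncomputable def chainIP (κ : Cardinal.{0}) (hreg : κ.IsRegular)
    (D : Ordinal.{0} → Cond → Cond)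
    (hbump : ∀ ζ c, c.1 + 1 ≤ (D ζ c).1)
    (hbound : ∀ ζ c, c.1 < κ.ord → (D ζ c).1 < κ.ord) : IntervalPartition κ where
  pts α := if α < κ.ord then (chain initC D α).1 else 0
  zero := by
    show (if (0 : Ordinal.{0}) < κ.ord then (chain initC D 0).1 else 0) = 0
    rw [if_pos (ord_pos hreg.aleph0_le), chain_zero]
    rfl
  lt_ord α hα := by
    show (if α < κ.ord then (chain initC D α).1 else 0) < κ.ord
    rw [if_pos hα]
    exact chain_fst_lt_ord hreg (ord_pos hreg.aleph0_le) hbound α hα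
  strictMono α β hab hβ := by
    show (if α < κ.ord then (chain initC D α).1 else 0)
      < (if β < κ.ord then (chain initC D β).1 else 0)
    rw [if_pos (hab.trans hβ), if_pos hβ]
    have h1 : (chain initC D α).1 + 1 ≤ (chain initC D (α + 1)).1 := by
      rw [chain_succ]; exact hbump _ _
    have h2 : (chain initC D (α + 1)).1 ≤ (chain initC D β).1 :=
      chain_fst_mono (fun ζ c => le_trans (lt_add_one' c.1).le (hbump ζ c)) β (α + 1)
        (by rw [Ordinal.add_one_eq_succ]; exact Order.succ_le_of_lt hab)
    exact lt_of_lt_of_le (lt_add_one' _) (h1.trans h2)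
  isCont δ hδ hlim := by
    show (if δ < κ.ord then (chain initC D δ).1 else 0)
      = ⨆ β : ↥(Set.Iio δ), (if β.1 < κ.ord then (chain initC D β.1).1 else 0)
    rw [if_pos hδ, chain_limit initC D hlim]
    exact iSup_congr (fun β => by rw [if_pos (β.2.trans hδ)])
  eq_zero_of_le α h := if_neg (not_lt.mpr h)

lemma chainIP_pts (κ : Cardinal.{0}) (hreg : κ.IsRegular)
    (D : Ordinal.{0} → Cond → Cond) (hbump) (hbound) {α : Ordinal.{0}} (hα : α < κ.ord) :
    (chainIP κ hreg D hbump hbound).pts α = (chain initC D α).1 := if_pos hα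

end IPLemmas


section StepLemma
variable {κ : Cardinal.{0}}

lemma nwd_ext (hκ : ℵ₀ ≤ κ) {A : Set (GenCantor κ)} (hA : IsNwd κ A)
    {d : Ordinal.{0}} (σ : Ordinal.{0} → Bool) (hd : d < κ.ord) :
    ∃ p : Cond, CExt (d, σ) p ∧ d + 1 ≤ p.1 ∧ p.1 < κ.ord ∧ cyl κ p.1 p.2 ∩ A = ∅ := by
  obtain ⟨δ', hdδ', hδ'κ, σ', hagree, hdisj⟩ := hA d hd σ
  have hsub : cyl κ (max δ' (d + 1)) σ' ⊆ cyl κ δ' σ' :=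
    fun x hx β hβ => hx β (hβ.trans_le (le_max_left _ _))
  refine ⟨(max δ' (d + 1), σ'),
    ⟨le_trans (lt_add_one' d).le (le_max_right _ _), fun β hβ => hagree β hβ⟩,
    le_max_right _ _, max_lt hδ'κ (succ_lt_ord hκ hd), ?_⟩
  exact Set.eq_empty_of_subset_empty (hdisj ▸ fun x hx => ⟨hsub hx.1, hx.2⟩)

/-- The inner fusion step function. -/
noncomputable def innerD (hκ : ℵ₀ ≤ κ) (B : Idx κ → Set (GenCantor κ))
    (hB : ∀ i, IsNwd κ (B i)) (δ o : Ordinal.{0})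
    (tk : Ordinal.{0} → ((↥(Set.Iio δ) → Bool) × Idx κ)) :
    Ordinal.{0} → Cond → Cond := fun ζ c =>
  if h : ζ < o ∧ c.1 < κ.ord then
    ((nwd_ext hκ (hB (tk ζ).2)
        (fun β => if hb : β < δ then (tk ζ).1 ⟨β, hb⟩ else c.2 β) h.2).choose.1,
     fun β => if β < δ then c.2 β
       else (nwd_ext hκ (hB (tk ζ).2)
        (fun β => if hb : β < δ then (tk ζ).1 ⟨β, hb⟩ else c.2 β) h.2).choose.2 β)
  else (c.1 + 1, c.2)

lemma innerD_pos (hκ : ℵ₀ ≤ κ) (B : Idx κ → Set (GenCantor κ))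
    (hB : ∀ i, IsNwd κ (B i)) (δ o : Ordinal.{0})
    (tk : Ordinal.{0} → ((↥(Set.Iio δ) → Bool) × Idx κ)) (ζ : Ordinal.{0}) (c : Cond)
    (h : ζ < o ∧ c.1 < κ.ord) :
    innerD hκ B hB δ o tk ζ c =
      ((nwd_ext hκ (hB (tk ζ).2)
          (fun β => if hb : β < δ then (tk ζ).1 ⟨β, hb⟩ else c.2 β) h.2).choose.1,
       fun β => if β < δ then c.2 β
         else (nwd_ext hκ (hB (tk ζ).2)
          (fun β => if hb : β < δ then (tk ζ).1 ⟨β, hb⟩ else c.2 β) h.2).choose.2 β) :=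
  dif_pos h

lemma innerD_neg (hκ : ℵ₀ ≤ κ) (B : Idx κ → Set (GenCantor κ))
    (hB : ∀ i, IsNwd κ (B i)) (δ o : Ordinal.{0})
    (tk : Ordinal.{0} → ((↥(Set.Iio δ) → Bool) × Idx κ)) (ζ : Ordinal.{0}) (c : Cond)
    (h : ¬(ζ < o ∧ c.1 < κ.ord)) :
    innerD hκ B hB δ o tk ζ c = (c.1 + 1, c.2) := dif_neg h

lemma innerD_ext (hκ : ℵ₀ ≤ κ) (B : Idx κ → Set (GenCantor κ)) (hB : ∀ i, IsNwd κ (B i))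
    (δ o : Ordinal.{0}) (tk) (hδbase : True) :
    ∀ ζ c, CExt c (innerD hκ B hB δ o tk ζ c) := by
  intro ζ c
  by_cases h : ζ < o ∧ c.1 < κ.ord
  · rw [innerD_pos hκ B hB δ o tk ζ c h]
    have hspec := (nwd_ext hκ (hB (tk ζ).2)
        (fun β => if hb : β < δ then (tk ζ).1 ⟨β, hb⟩ else c.2 β) h.2).choose_spec
    refine ⟨hspec.1.1, fun β hβ => ?_⟩
    show (if β < δ then c.2 β else _) = c.2 β
    by_cases hb : β < δ
    · rw [if_pos hb]
    · rw [if_neg hb, hspec.1.2 β hβ]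
      show (if hb' : β < δ then (tk ζ).1 ⟨β, hb'⟩ else c.2 β) = c.2 β
      rw [dif_neg hb]
  · rw [innerD_neg hκ B hB δ o tk ζ c h]
    exact ⟨(lt_add_one' c.1).le, fun _ _ => rfl⟩

lemma innerD_bump (hκ : ℵ₀ ≤ κ) (B : Idx κ → Set (GenCantor κ)) (hB : ∀ i, IsNwd κ (B i))
    (δ o : Ordinal.{0}) (tk) :
    ∀ ζ c, c.1 + 1 ≤ (innerD hκ B hB δ o tk ζ c).1 := by
  intro ζ c
  by_cases h : ζ < o ∧ c.1 < κ.ord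
  · rw [innerD_pos hκ B hB δ o tk ζ c h]
    exact (nwd_ext hκ (hB (tk ζ).2)
      (fun β => if hb : β < δ then (tk ζ).1 ⟨β, hb⟩ else c.2 β) h.2).choose_spec.2.1
  · rw [innerD_neg hκ B hB δ o tk ζ c h]

lemma innerD_bound (hκ : ℵ₀ ≤ κ) (B : Idx κ → Set (GenCantor κ)) (hB : ∀ i, IsNwd κ (B i))
    (δ o : Ordinal.{0}) (tk) :
    ∀ ζ c, c.1 < κ.ord → (innerD hκ B hB δ o tk ζ c).1 < κ.ord := by
  intro ζ c hc
  by_cases h : ζ < o ∧ c.1 < κ.ord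
  · rw [innerD_pos hκ B hB δ o tk ζ c h]
    exact (nwd_ext hκ (hB (tk ζ).2)
      (fun β => if hb : β < δ then (tk ζ).1 ⟨β, hb⟩ else c.2 β) h.2).choose_spec.2.2.1
  · rw [innerD_neg hκ B hB δ o tk ζ c h]
    exact succ_lt_ord hκ hc

/-- The key fusion step: one can extend any condition so as to guard against all
nowhere dense sets `B i`, `i < α`, regardless of the values below `δ`. -/
lemma step_exists (hinacc : κ.IsInaccessible)
    (B : Idx κ → Set (GenCantor κ)) (hB : ∀ i, IsNwd κ (B i))
    {δ α : Ordinal.{0}} (hδ : δ < κ.ord) (hα : α < κ.ord) (τ : Ordinal.{0} → Bool) :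
    ∃ d : Cond, CExt (δ, τ) d ∧ δ + 1 ≤ d.1 ∧ d.1 < κ.ord ∧
      ∀ i : Idx κ, i.1 < α → ∀ y : GenCantor κ,
        (∀ β : Idx κ, δ ≤ β.1 → β.1 < d.1 → y β = d.2 β.1) → y ∉ B i := by
  have hreg : κ.IsRegular := hinacc.isRegular
  obtain ⟨hκ0, -, hSL⟩ := hinacc
  have hκ : ℵ₀ ≤ κ := hreg.aleph0_le
  set T : Type 1 := (↥(Set.Iio δ) → Bool) × {i : Idx κ // i.1 < α} with hTdef
  set c0 : Cardinal.{0} := (2 ^ δ.card) * α.card with hc0def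
  have hc0 : c0 < κ :=
    Cardinal.mul_lt_of_lt hκ (hSL (Cardinal.lt_ord.mp hδ)) (Cardinal.lt_ord.mp hα)
  have hTcard : #T = Cardinal.lift.{1} c0 := by
    have e0 : {i : Idx κ // i.1 < α} ≃ ↥(Set.Iio α) :=
      { toFun := fun i => ⟨i.1.1, i.2⟩
        invFun := fun b => ⟨⟨b.1, b.2.trans hα⟩, b.2⟩
        left_inv := fun i => rfl
        right_inv := fun b => rfl }
    have h1 : #(↥(Set.Iio δ) → Bool) = 2 ^ Cardinal.lift.{1} δ.card := by
      simp [Cardinal.mk_arrow, Ordinal.mk_Iio_ordinal]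
    rw [hTdef, Cardinal.mk_prod, Cardinal.mk_congr e0, Ordinal.mk_Iio_ordinal,
      Cardinal.lift_id, Cardinal.lift_id, h1, hc0def, Cardinal.lift_mul,
      Cardinal.lift_two_power]
  set o : Ordinal.{0} := c0.ord with hodef
  have ho : o < κ.ord := Cardinal.ord_lt_ord.mpr hc0
  have hiio : #(↥(Set.Iio o)) = #T := by
    rw [Ordinal.mk_Iio_ordinal, hTcard, hodef, Cardinal.card_ord]
  obtain ⟨e⟩ : Nonempty (↥(Set.Iio o) ≃ T) := Cardinal.eq.mp hiio
  set tk : Ordinal.{0} → ((↥(Set.Iio δ) → Bool) × Idx κ) := fun ζ =>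
    if h : ζ < o then ((e ⟨ζ, h⟩).1, (e ⟨ζ, h⟩).2.1)
    else ((fun _ => false), ⟨0, ord_pos hκ⟩) with htkdef
  set D' := innerD hκ B hB δ o tk with hD'def
  have hext := innerD_ext hκ B hB δ o tk trivial
  have hbump := innerD_bump hκ B hB δ o tk
  have hbound := innerD_bound hκ B hB δ o tk
  set d : Cond := chain (δ, τ) D' (o + 1) with hddef
  have hdκ : d.1 < κ.ord :=
    chain_fst_lt_ord hreg hδ hbound (o + 1) (succ_lt_ord hκ ho)
  have hCExt : CExt (δ, τ) d := by
    have := chain_mono (init := (δ, τ)) hext (o + 1) 0 (zero_le)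
    rwa [chain_zero] at this
  have hδd : δ + 1 ≤ d.1 := by
    have h1 : (chain (δ, τ) D' 0).1 + 1 ≤ (chain (δ, τ) D' (0 + 1)).1 := by
      rw [chain_succ]; exact hbump _ _
    rw [chain_zero, zero_add] at h1
    refine h1.trans ?_
    refine chain_fst_mono (fun ζ c => le_trans (lt_add_one' c.1).le (hbump ζ c)) (o + 1) 1 ?_
    exact Order.one_le_iff_pos.mpr (lt_of_le_of_lt (zero_le) (lt_add_one' o))
  refine ⟨d, hCExt, hδd, hdκ, ?_⟩
  intro i hi y hy
  set s : ↥(Set.Iio δ) → Bool := fun b => y ⟨b.1, b.2.trans hδ⟩ with hsdef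
  set tζ : ↥(Set.Iio o) := e.symm (s, ⟨i, hi⟩) with htζdef
  have hζ₀o : tζ.1 < o := tζ.2
  set c' : Cond := chain (δ, τ) D' tζ.1 with hc'def
  have hc'κ : c'.1 < κ.ord :=
    chain_fst_lt_ord hreg hδ hbound tζ.1 (hζ₀o.trans ho)
  have hguard : tζ.1 < o ∧ c'.1 < κ.ord := ⟨hζ₀o, hc'κ⟩
  have htask : tk tζ.1 = (s, i) := by
    rw [htkdef]
    show dite _ _ _ = _
    rw [dif_pos hζ₀o]
    have h2 : (⟨tζ.1, hζ₀o⟩ : ↥(Set.Iio o)) = tζ := Subtype.ext rfl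
    rw [h2, htζdef, Equiv.apply_symm_apply]
  have hδc' : δ ≤ c'.1 := by
    have := chain_mono (init := (δ, τ)) hext tζ.1 0 (zero_le)
    rw [chain_zero] at this
    exact this.1
  have hsucc : chain (δ, τ) D' (tζ.1 + 1) = D' tζ.1 c' := by rw [hc'def, chain_succ]
  have hζ₀d : tζ.1 + 1 ≤ o + 1 := by
    rw [Ordinal.add_one_eq_succ, Ordinal.add_one_eq_succ]
    exact Order.succ_le_succ hζ₀o.le
  have hcoh : CExt (chain (δ, τ) D' (tζ.1 + 1)) d := chain_mono hext (o + 1) (tζ.1 + 1) hζ₀d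
  have hpos := innerD_pos hκ B hB δ o tk tζ.1 c' hguard
  rw [← hD'def] at hpos
  set P := nwd_ext hκ (hB (tk tζ.1).2)
      (fun β => if hb : β < δ then (tk tζ.1).1 ⟨β, hb⟩ else c'.2 β) hguard.2 with hPdef
  have hspec := P.choose_spec
  have hycyl : y ∈ cyl κ P.choose.1 P.choose.2 := by
    intro β hβ
    have hβd : β.1 < d.1 := by
      refine lt_of_lt_of_le hβ ?_
      have h1 : P.choose.1 = (chain (δ, τ) D' (tζ.1 + 1)).1 := by rw [hsucc, hpos]
      rw [h1]
      exact hcoh.1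
    by_cases hb : β.1 < δ
    · have h1 : P.choose.2 β.1 = if hb' : β.1 < δ then (tk tζ.1).1 ⟨β.1, hb'⟩ else c'.2 β.1 :=
        hspec.1.2 β.1 (lt_of_lt_of_le hb hδc')
      rw [h1, dif_pos hb, htask]
    · have hδβ : δ ≤ β.1 := not_lt.mp hb
      have h1 : y β = d.2 β.1 := hy β hδβ hβd
      have h2 : d.2 β.1 = (chain (δ, τ) D' (tζ.1 + 1)).2 β.1 := by
        refine hcoh.2 β.1 ?_
        rw [hsucc, hpos]
        exact hβ
      have h3 : (chain (δ, τ) D' (tζ.1 + 1)).2 β.1 = P.choose.2 β.1 := by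
        rw [hsucc, hpos]
        show (if β.1 < δ then c'.2 β.1 else P.choose.2 β.1) = _
        rw [if_neg hb]
      rw [h1, h2, h3]
  intro hyB
  have hmem : y ∈ cyl κ P.choose.1 P.choose.2 ∩ B (tk tζ.1).2 :=
    ⟨hycyl, by rw [htask]; exact hyB⟩
  rw [hspec.2.2.2] at hmem
  exact hmem

end StepLemma


section Char
variable {κ : Cardinal.{0}}

/-- The outer fusion step function. -/
noncomputable def outerD (hinacc : κ.IsInaccessible) (B : Idx κ → Set (GenCantor κ))
    (hB : ∀ i, IsNwd κ (B i)) : Ordinal.{0} → Cond → Cond := fun α c =>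
  if h : α < κ.ord ∧ c.1 < κ.ord then (step_exists hinacc B hB h.2 h.1 c.2).choose
  else (c.1 + 1, c.2)

lemma outerD_pos (hinacc : κ.IsInaccessible) (B : Idx κ → Set (GenCantor κ))
    (hB : ∀ i, IsNwd κ (B i)) (α : Ordinal.{0}) (c : Cond) (h : α < κ.ord ∧ c.1 < κ.ord) :
    outerD hinacc B hB α c = (step_exists hinacc B hB h.2 h.1 c.2).choose := dif_pos h

lemma outerD_ext (hinacc : κ.IsInaccessible) (B : Idx κ → Set (GenCantor κ))
    (hB : ∀ i, IsNwd κ (B i)) : ∀ α c, CExt c (outerD hinacc B hB α c) := by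
  intro α c
  by_cases h : α < κ.ord ∧ c.1 < κ.ord
  · rw [outerD_pos hinacc B hB α c h]
    exact (step_exists hinacc B hB h.2 h.1 c.2).choose_spec.1
  · rw [outerD, dif_neg h]
    exact ⟨(lt_add_one' c.1).le, fun _ _ => rfl⟩

lemma outerD_bump (hinacc : κ.IsInaccessible) (B : Idx κ → Set (GenCantor κ))
    (hB : ∀ i, IsNwd κ (B i)) : ∀ α c, c.1 + 1 ≤ (outerD hinacc B hB α c).1 := by
  intro α c
  by_cases h : α < κ.ord ∧ c.1 < κ.ord
  · rw [outerD_pos hinacc B hB α c h]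
    exact (step_exists hinacc B hB h.2 h.1 c.2).choose_spec.2.1
  · rw [outerD, dif_neg h]

lemma outerD_bound (hinacc : κ.IsInaccessible) (B : Idx κ → Set (GenCantor κ))
    (hB : ∀ i, IsNwd κ (B i)) : ∀ α c, c.1 < κ.ord → (outerD hinacc B hB α c).1 < κ.ord := by
  intro α c hc
  by_cases h : α < κ.ord ∧ c.1 < κ.ord
  · rw [outerD_pos hinacc B hB α c h]
    exact (step_exists hinacc B hB h.2 h.1 c.2).choose_spec.2.2.1
  · rw [outerD, dif_neg h]
    exact succ_lt_ord hinacc.isRegular.aleph0_le hc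

lemma matches_self (hκ : ℵ₀ ≤ κ) (x : GenCantor κ) (I : IntervalPartition κ) :
    x ∈ MatchSet κ x I :=
  fun γ hγ => ⟨γ, le_rfl, hγ, fun _ _ _ => rfl⟩

/-- Hard direction of the combinatorial characterization of κ-meagerness. -/
theorem char_hard (hinacc : κ.IsInaccessible) {A : Set (GenCantor κ)}
    (hA : IsKMeager κ A) :
    ∃ (x : GenCantor κ) (I : IntervalPartition κ), MatchSet κ x I ∩ A = ∅ := by
  obtain ⟨B, hB, rfl⟩ := hA
  have hreg : κ.IsRegular := hinacc.isRegular
  have hκ : ℵ₀ ≤ κ := hreg.aleph0_le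
  set DO := outerD hinacc B hB with hDO
  have hext := outerD_ext hinacc B hB
  have hbump := outerD_bump hinacc B hB
  have hbound := outerD_bound hinacc B hB
  set I : IntervalPartition κ := chainIP κ hreg DO hbump hbound with hI
  set x : GenCantor κ := fun β => (chain initC DO (β.1 + 1)).2 β.1 with hx
  have hinit : (initC).1 < κ.ord := ord_pos hκ
  have hxcoh : ∀ ξ (β : Idx κ), β.1 < (chain initC DO ξ).1 →
      x β = (chain initC DO ξ).2 β.1 := by
    intro ξ β hβ
    have hβ1 : β.1 < (chain initC DO (β.1 + 1)).1 :=
      lt_of_lt_of_le (lt_add_one' β.1) (chain_fst_ge hbump (β.1 + 1))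
    rcases le_total (β.1 + 1) ξ with h | h
    · exact ((chain_mono hext ξ (β.1 + 1) h).2 β.1 hβ1).symm
    · exact (chain_mono hext (β.1 + 1) ξ h).2 β.1 hβ
  refine ⟨x, I, ?_⟩
  rw [Set.eq_empty_iff_forall_notMem]
  rintro y ⟨hyM, hyA⟩
  rw [Set.mem_iUnion] at hyA
  obtain ⟨i, hyB⟩ := hyA
  have hγ : i.1 + 1 < κ.ord := succ_lt_ord hκ i.2
  obtain ⟨α, hγα, hακ, hagree⟩ := hyM (i.1 + 1) hγ
  have hcα : (chain initC DO α).1 < κ.ord := chain_fst_lt_ord hreg hinit hbound α hακ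
  have hguard : α < κ.ord ∧ (chain initC DO α).1 < κ.ord := ⟨hακ, hcα⟩
  have hsucc : chain initC DO (α + 1)
      = (step_exists hinacc B hB hguard.2 hguard.1 (chain initC DO α).2).choose := by
    rw [chain_succ]
    exact outerD_pos hinacc B hB α _ hguard
  have hspec := (step_exists hinacc B hB hguard.2 hguard.1 (chain initC DO α).2).choose_spec
  have hps : I.pts α = (chain initC DO α).1 := chainIP_pts κ hreg DO hbump hbound hακ
  have hps1 : I.pts (α + 1) = (chain initC DO (α + 1)).1 :=
    chainIP_pts κ hreg DO hbump hbound (succ_lt_ord hκ hακ)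
  refine hspec.2.2.2 i (lt_of_lt_of_le (lt_add_one' i.1) hγα) y ?_ hyB
  intro β hβ1 hβ2
  have e1 : y β = x β := by
    refine hagree β ?_ ?_
    · rw [hps]; exact hβ1
    · rw [hps1, hsucc]; exact hβ2
  have e2 : x β = (chain initC DO (α + 1)).2 β.1 := by
    refine hxcoh (α + 1) β ?_
    rw [hsucc]; exact hβ2
  rw [e1, e2, hsucc]

/-- Easy direction of the combinatorial characterization of κ-meagerness. -/
theorem char_easy (hκ : ℵ₀ ≤ κ) {A : Set (GenCantor κ)} (x : GenCantor κ)
    (I : IntervalPartition κ) (hdisj : MatchSet κ x I ∩ A = ∅) : IsKMeager κ A := by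
  set N : Idx κ → Set (GenCantor κ) := fun γ =>
    A ∩ {y | ∀ α, γ.1 ≤ α → α < κ.ord →
      ∃ β : Idx κ, I.pts α ≤ β.1 ∧ β.1 < I.pts (α + 1) ∧ y β ≠ x β} with hN
  refine ⟨N, ?_, ?_⟩
  · intro γ δ hδ σ
    set α := max γ.1 δ with hα
    have hακ : α < κ.ord := max_lt γ.2 hδ
    have hδα : δ ≤ α := le_max_right _ _
    have hαpts : α ≤ I.pts α := I.le_pts α hακ
    have h1 : I.pts α ≤ I.pts (α + 1) := I.pts_mono (lt_add_one' α).le (succ_lt_ord hκ hακ)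
    refine ⟨I.pts (α + 1), le_trans (hδα.trans hαpts) h1, I.lt_ord _ (succ_lt_ord hκ hακ),
      fun β => if h : β < κ.ord then (if β < δ then σ β else x ⟨β, h⟩) else false, ?_, ?_⟩
    · intro β hβ
      show (if h : β < κ.ord then (if β < δ then σ β else x ⟨β, h⟩) else false) = σ β
      rw [dif_pos (hβ.trans hδ), if_pos hβ]
    · rw [Set.eq_empty_iff_forall_notMem]
      rintro z ⟨hzc, hzA, hzN⟩
      obtain ⟨β, hβ1, hβ2, hβ3⟩ := hzN α (le_max_left _ _) hακ
      have hzx : z β = x β := by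
        have h2 : z β = if h : β.1 < κ.ord then (if β.1 < δ then σ β.1 else x ⟨β.1, h⟩)
            else false := hzc β hβ2
        have hβκ : β.1 < κ.ord := β.2
        rw [dif_pos hβκ,
          if_neg (not_lt.mpr (le_trans (hδα.trans hαpts) hβ1))] at h2
        exact h2
      exact hβ3 hzx
  · apply Set.Subset.antisymm
    · intro y hyA
      have hyM : y ∉ MatchSet κ x I := by
        intro hyM
        have : y ∈ MatchSet κ x I ∩ A := ⟨hyM, hyA⟩
        rw [hdisj] at this
        exact this
      rw [MatchSet, Set.mem_setOf_eq, Matches] at hyM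
      push_neg at hyM
      obtain ⟨γ, hγκ, hγ⟩ := hyM
      rw [Set.mem_iUnion]
      refine ⟨⟨γ, hγκ⟩, hyA, ?_⟩
      intro α hγα hακ
      obtain ⟨β, hβ1, hβ2, hβ3⟩ := hγ α hγα hακ
      exact ⟨β, hβ1, hβ2, hβ3⟩
    · exact Set.iUnion_subset (fun γ y hy => hy.1)

/-- The complement of a match set is κ-meager. -/
theorem matchSet_compl_meager (hκ : ℵ₀ ≤ κ) (x : GenCantor κ) (I : IntervalPartition κ) :
    IsKMeager κ (MatchSet κ x I)ᶜ :=
  char_easy hκ x I (Set.inter_compl_self _)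

end Char

section IpOf
variable {κ : Cardinal.{0}}

/-- Step function for the interval partition generated by `g : κ^κ`. -/
noncomputable def fStep (κ : Cardinal.{0}) (g : GenBaire κ) : Ordinal.{0} → Cond → Cond :=
  fun _ c =>
    (max (c.1 + 1)
      (⨆ β : ↥(Set.Iio (c.1 + 1)), if h : β.1 < κ.ord then ((g ⟨β.1, h⟩).1 + 1) else 0),
     c.2)

lemma fStep_bump (g : GenBaire κ) : ∀ ζ c, c.1 + 1 ≤ (fStep κ g ζ c).1 :=
  fun _ _ => le_max_left _ _

lemma fStep_bound (hκ : ℵ₀ ≤ κ) (hreg : κ.IsRegular) (g : GenBaire κ) :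
    ∀ ζ c, c.1 < κ.ord → (fStep κ g ζ c).1 < κ.ord := by
  intro ζ c hc
  refine max_lt (succ_lt_ord hκ hc) ?_
  refine iSup_Iio_lt_ord hreg (succ_lt_ord hκ hc) _ (fun β => ?_)
  by_cases h : β.1 < κ.ord
  · rw [dif_pos h]
    exact succ_lt_ord hκ (g ⟨β.1, h⟩).2
  · rw [dif_neg h]
    exact ord_pos hκ

/-- The interval partition generated by `g : κ^κ`: each interval's right endpoint
bounds `g` on all inputs up to the interval's left endpoint. -/
noncomputable def ipOf (hreg : κ.IsRegular) (g : GenBaire κ) : IntervalPartition κ :=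
  chainIP κ hreg (fStep κ g) (fStep_bump g) (fStep_bound hreg.aleph0_le hreg g)

lemma ipOf_spec (hreg : κ.IsRegular) (g : GenBaire κ) {α : Ordinal.{0}} (hα : α < κ.ord)
    (β : Idx κ) (hβ : β.1 ≤ (ipOf hreg g).pts α) :
    ((g β).1 : Ordinal.{0}) < (ipOf hreg g).pts (α + 1) := by
  have hκ : ℵ₀ ≤ κ := hreg.aleph0_le
  have h1 : (ipOf hreg g).pts α = (chain initC (fStep κ g) α).1 :=
    chainIP_pts κ hreg _ _ _ hα
  have h2 : (ipOf hreg g).pts (α + 1) = (chain initC (fStep κ g) (α + 1)).1 :=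
    chainIP_pts κ hreg _ _ _ (succ_lt_ord hκ hα)
  rw [h2, chain_succ]
  show _ < max _ _
  refine lt_of_lt_of_le ?_ (le_max_right _ _)
  have hβm : β.1 < (chain initC (fStep κ g) α).1 + 1 := by
    rw [h1] at hβ
    exact lt_of_le_of_lt hβ (lt_add_one' _)
  have hle := le_ciSup (bddAbove_range_Iio
    (fun β' : ↥(Set.Iio ((chain initC (fStep κ g) α).1 + 1)) =>
      if h : β'.1 < κ.ord then ((g ⟨β'.1, h⟩).1 + 1) else 0)) ⟨β.1, hβm⟩
  have hβκ : β.1 < κ.ord := β.2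
  rw [dif_pos hβκ] at hle
  exact lt_of_lt_of_le (lt_add_one' (g β).1) hle

end IpOf

section Dom
variable {κ : Cardinal.{0}}

/-- If every real matching `(y, K)` matches `(x0, I)`, then eventually every
`K`-interval contains an `I`-interval. -/
lemma ip_dom_of_matchSet_subset (hreg : κ.IsRegular) {y x0 : GenCantor κ}
    {K I : IntervalPartition κ} (hsub : MatchSet κ y K ⊆ MatchSet κ x0 I) :
    ∃ γ, γ < κ.ord ∧ ∀ μ, γ ≤ μ → μ < κ.ord →
      ∃ α, α < κ.ord ∧ K.pts μ ≤ I.pts α ∧ I.pts (α + 1) ≤ K.pts (μ + 1) := by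
  classical
  have hκ : ℵ₀ ≤ κ := hreg.aleph0_le
  by_contra hcon
  push_neg at hcon
  -- the set of "bad" K-intervals is cofinal
  have hcof : ∀ γ, γ < κ.ord → ∃ μ, γ ≤ μ ∧ μ < κ.ord ∧
      ∀ α, α < κ.ord → K.pts μ ≤ I.pts α → ¬(I.pts (α + 1) ≤ K.pts (μ + 1)) := by
    intro γ hγ
    obtain ⟨μ, hγμ, hμκ, hbad⟩ := hcon γ hγ
    exact ⟨μ, hγμ, hμκ, fun α hα h1 h2 => absurd h2 (not_le.mpr (hbad α hα h1))⟩
  -- a sparse cofinal choice of bad intervals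
  set Dsp : Ordinal.{0} → Cond → Cond := fun _ c =>
    if h : c.1 + 2 < κ.ord then ((hcof (c.1 + 2) h).choose, c.2)
    else (c.1 + 1, c.2) with hDspdef
  have hDpos : ∀ ζ (c : Cond) (h : c.1 + 2 < κ.ord),
      Dsp ζ c = ((hcof (c.1 + 2) h).choose, c.2) := fun ζ c h => dif_pos h
  have hDneg : ∀ ζ (c : Cond) (h : ¬ c.1 + 2 < κ.ord),
      Dsp ζ c = (c.1 + 1, c.2) := fun ζ c h => dif_neg h
  have h12 : ∀ a : Ordinal.{0}, a + 1 ≤ a + 2 :=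
    fun a => add_le_add_right one_le_two a
  have hbump : ∀ ζ c, c.1 + 1 ≤ (Dsp ζ c).1 := by
    intro ζ c
    by_cases h : c.1 + 2 < κ.ord
    · rw [hDpos ζ c h]
      exact (h12 c.1).trans (hcof (c.1 + 2) h).choose_spec.1
    · rw [hDneg ζ c h]
  have hbound : ∀ ζ c, c.1 < κ.ord → (Dsp ζ c).1 < κ.ord := by
    intro ζ c hc
    by_cases h : c.1 + 2 < κ.ord
    · rw [hDpos ζ c h]
      exact (hcof (c.1 + 2) h).choose_spec.2.1
    · rw [hDneg ζ c h]
      exact succ_lt_ord hκ hc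
  have hch : ∀ ζ, ζ < κ.ord → (chain initC Dsp ζ).1 < κ.ord :=
    chain_fst_lt_ord hreg (ord_pos hκ) hbound
  set sp : Idx κ → Ordinal.{0} := fun ζ => (chain initC Dsp (ζ.1 + 1)).1 with hspdef
  have hsp2 : ∀ a : Ordinal.{0}, a < κ.ord → a + 2 < κ.ord := by
    intro a ha
    have h2eq : a + 2 = (a + 1) + 1 := by rw [add_assoc, one_add_one_eq_two]
    rw [h2eq]
    exact succ_lt_ord hκ (succ_lt_ord hκ ha)
  have hspκ : ∀ ζ, sp ζ < κ.ord := fun ζ => hch (ζ.1 + 1) (succ_lt_ord hκ ζ.2)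
  have hspbad : ∀ ζ, ∀ α, α < κ.ord → K.pts (sp ζ) ≤ I.pts α →
      ¬(I.pts (α + 1) ≤ K.pts (sp ζ + 1)) := by
    intro ζ
    have hcκ : (chain initC Dsp ζ.1).1 < κ.ord := hch ζ.1 (lt_trans (lt_add_one' _) (succ_lt_ord hκ ζ.2))
    have hg : (chain initC Dsp ζ.1).1 + 2 < κ.ord := hsp2 _ hcκ
    have hstep : sp ζ = (Dsp ζ.1 (chain initC Dsp ζ.1)).1 := by
      show (chain initC Dsp (ζ.1 + 1)).1 = (Dsp ζ.1 (chain initC Dsp ζ.1)).1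
      rw [chain_succ]
    rw [hDpos ζ.1 (chain initC Dsp ζ.1) hg] at hstep
    have hstep2 : sp ζ = (hcof ((chain initC Dsp ζ.1).1 + 2) hg).choose := hstep
    rw [hstep2]
    exact (hcof _ hg).choose_spec.2.2
  have hspge : ∀ ζ : Idx κ, ζ.1 ≤ sp ζ :=
    fun ζ => le_trans (lt_add_one' ζ.1).le (chain_fst_ge hbump (ζ.1 + 1))
  have hspsparse : ∀ ζ ξ : Idx κ, ζ < ξ → sp ζ + 1 < sp ξ := by
    intro ζ ξ hζξ
    have hcκ : (chain initC Dsp (ζ.1 + 1)).1 < κ.ord := hspκ ζ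
    have hg : (chain initC Dsp (ζ.1 + 1)).1 + 2 < κ.ord := hsp2 _ hcκ
    have h1 : (chain initC Dsp (ζ.1 + 1 + 1)).1 = (Dsp (ζ.1 + 1) (chain initC Dsp (ζ.1 + 1))).1 := by
      rw [chain_succ]
    rw [hDpos (ζ.1 + 1) (chain initC Dsp (ζ.1 + 1)) hg] at h1
    have h1' : (chain initC Dsp (ζ.1 + 1 + 1)).1
        = (hcof ((chain initC Dsp (ζ.1 + 1)).1 + 2) hg).choose := h1
    have h2 : sp ζ + 2 ≤ (chain initC Dsp (ζ.1 + 1 + 1)).1 := by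
      rw [h1']
      exact (hcof _ hg).choose_spec.1
    have h3 : (chain initC Dsp (ζ.1 + 1 + 1)).1 ≤ sp ξ := by
      refine chain_fst_mono (fun ζ' c => le_trans (lt_add_one' c.1).le (hbump ζ' c)) (ξ.1 + 1) (ζ.1 + 1 + 1) ?_
      simp only [Ordinal.add_one_eq_succ]
      exact Order.succ_le_succ (Order.succ_le_of_lt hζξ)
    refine lt_of_lt_of_le (lt_of_lt_of_le ?_ h2) h3
    have h2eq : sp ζ + 2 = (sp ζ + 1) + 1 := by rw [add_assoc, one_add_one_eq_two]
    rw [h2eq]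
    exact lt_add_one' _
  -- the interval membership predicate
  set U : Ordinal.{0} → Prop := fun ξξ =>
    ∃ ζ : Idx κ, K.pts (sp ζ) ≤ ξξ ∧ ξξ < K.pts (sp ζ + 1) with hUdef
  set y' : GenCantor κ := fun ξ => if U ξ.1 then y ξ else !(x0 ξ) with hy'def
  have hy'U : ∀ ξ : Idx κ, U ξ.1 → y' ξ = y ξ := by
    intro ξ h
    rw [hy'def]
    show (if U ξ.1 then y ξ else !(x0 ξ)) = y ξ
    rw [if_pos h]
  have hy'nU : ∀ ξ : Idx κ, ¬ U ξ.1 → y' ξ = !(x0 ξ) := by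
    intro ξ h
    rw [hy'def]
    show (if U ξ.1 then y ξ else !(x0 ξ)) = !(x0 ξ)
    rw [if_neg h]
  have hy'M : y' ∈ MatchSet κ y K := by
    intro γ hγ
    set ζ : Idx κ := ⟨γ, hγ⟩
    refine ⟨sp ζ, hspge ζ, hspκ ζ, ?_⟩
    intro β h1 h2
    exact hy'U β ⟨ζ, h1, h2⟩
  have hy'I : y' ∈ MatchSet κ x0 I := hsub hy'M
  obtain ⟨α₁, _, hα₁κ, hagree⟩ := hy'I 0 (ord_pos hκ)
  have hα₁1 : α₁ + 1 < κ.ord := succ_lt_ord hκ hα₁κ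
  set ξ0 : Idx κ := ⟨I.pts α₁, I.lt_ord α₁ hα₁κ⟩ with hξ0def
  have hξ0lt : ξ0.1 < I.pts (α₁ + 1) := I.strictMono _ _ (lt_add_one' α₁) hα₁1
  have hy'x0 : y' ξ0 = x0 ξ0 := hagree ξ0 le_rfl hξ0lt
  have hU0 : U ξ0.1 := by
    by_contra h
    rw [hy'nU ξ0 h] at hy'x0
    exact (Bool.not_ne_self (x0 ξ0)) hy'x0
  obtain ⟨ζ0, hζ01, hζ02⟩ := hU0
  -- the I-interval α₁ is contained in the K-interval sp ζ0
  have hIsub : I.pts (α₁ + 1) ≤ K.pts (sp ζ0 + 1) := by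
    by_contra hcon2
    push_neg at hcon2
    set ξ1 : Idx κ := ⟨K.pts (sp ζ0 + 1), K.lt_ord _ (succ_lt_ord hκ (hspκ ζ0))⟩ with hξ1def
    have hξ1ge : I.pts α₁ ≤ ξ1.1 := hζ02.le
    have hy'x1 : y' ξ1 = x0 ξ1 := hagree ξ1 hξ1ge hcon2
    have hU1 : U ξ1.1 := by
      by_contra h
      rw [hy'nU ξ1 h] at hy'x1
      exact (Bool.not_ne_self (x0 ξ1)) hy'x1
    obtain ⟨ζ1, hζ11, hζ12⟩ := hU1
    -- then sp ζ1 = sp ζ0 + 1, contradicting sparseness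
    have hsp0κ : sp ζ0 + 1 < κ.ord := succ_lt_ord hκ (hspκ ζ0)
    have hlt : sp ζ0 + 1 < sp ζ1 + 1 :=
      (K.pts_lt_iff hsp0κ (succ_lt_ord hκ (hspκ ζ1))).mp hζ12
    have hge : sp ζ1 ≤ sp ζ0 + 1 := by
      by_contra h
      push_neg at h
      exact absurd (K.strictMono _ _ h (hspκ ζ1)) (not_lt.mpr hζ11)
    have h01 : sp ζ0 < sp ζ1 := by
      rw [Ordinal.add_one_eq_succ, Ordinal.add_one_eq_succ] at hlt
      exact Order.succ_lt_succ_iff.mp hlt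
    rcases lt_trichotomy ζ0 ζ1 with h | h | h
    · exact absurd hge (not_le.mpr (hspsparse ζ0 ζ1 h))
    · rw [h] at h01; exact lt_irrefl _ h01
    · exact lt_asymm h01 (lt_trans (lt_add_one' _) (hspsparse ζ1 ζ0 h))
  exact hspbad ζ0 α₁ hα₁κ hζ01 hIsub

end Dom

section Comb
variable {κ : Cardinal.{0}}

/-- From a matching `y ∈ Match(x, I)` one can extract a function `hfun` such that any
partition generated by a function dominating `hfun` transfers matching. -/
lemma comb (hreg : κ.IsRegular) {x y : GenCantor κ} {I : IntervalPartition κ}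
    (hyM : y ∈ MatchSet κ x I) :
    ∃ hfun : GenBaire κ, ∀ g : GenBaire κ, EvDom κ hfun g →
      MatchSet κ y (ipOf hreg g) ⊆ MatchSet κ x I := by
  have hκ : ℵ₀ ≤ κ := hreg.aleph0_le
  have hw1 : ∀ β : Idx κ, β.1 ≤ (hyM β.1 β.2).choose := fun β => (hyM β.1 β.2).choose_spec.1
  have hw2 : ∀ β : Idx κ, (hyM β.1 β.2).choose < κ.ord :=
    fun β => (hyM β.1 β.2).choose_spec.2.1
  have hw3 : ∀ β : Idx κ, ∀ β' : Idx κ, I.pts ((hyM β.1 β.2).choose) ≤ β'.1 →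
      β'.1 < I.pts ((hyM β.1 β.2).choose + 1) → y β' = x β' :=
    fun β => (hyM β.1 β.2).choose_spec.2.2
  refine ⟨fun β => ⟨I.pts ((hyM β.1 β.2).choose + 1), I.lt_ord _ (succ_lt_ord hκ (hw2 β))⟩, ?_⟩
  intro g hdom z hz γ' hγ'κ
  obtain ⟨a, ha⟩ := hdom
  have hγ'' : max (a.1 + 1) (I.pts γ' + 1) < κ.ord :=
    max_lt (succ_lt_ord hκ a.2) (succ_lt_ord hκ (I.lt_ord _ hγ'κ))
  obtain ⟨μ, hμ1, hμκ, hzy⟩ := hz _ hγ''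
  set L := ipOf hreg g with hL
  set β : Idx κ := ⟨L.pts μ, L.lt_ord μ hμκ⟩ with hβdef
  have hμβ : μ ≤ β.1 := L.le_pts μ hμκ
  have hβa : a < β := by
    show a.1 < β.1
    calc a.1 < a.1 + 1 := lt_add_one' _
    _ ≤ max (a.1 + 1) (I.pts γ' + 1) := le_max_left _ _
    _ ≤ μ := hμ1
    _ ≤ β.1 := hμβ
  have hgβ : I.pts ((hyM β.1 β.2).choose + 1) < (g β).1 := ha β hβa
  have hIL1 : L.pts μ ≤ I.pts ((hyM β.1 β.2).choose) :=
    le_trans (hw1 β) (I.le_pts _ (hw2 β))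
  have hIL2 : I.pts ((hyM β.1 β.2).choose + 1) < L.pts (μ + 1) :=
    lt_trans hgβ (ipOf_spec hreg g hμκ β le_rfl)
  refine ⟨(hyM β.1 β.2).choose, ?_, hw2 β, ?_⟩
  · have h1 : I.pts γ' < I.pts ((hyM β.1 β.2).choose) := by
      calc I.pts γ' < I.pts γ' + 1 := lt_add_one' _
      _ ≤ max (a.1 + 1) (I.pts γ' + 1) := le_max_right _ _
      _ ≤ μ := hμ1
      _ ≤ L.pts μ := hμβ
      _ ≤ _ := hIL1
    exact le_of_lt ((I.pts_lt_iff hγ'κ (hw2 β)).mp h1)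
  · intro β' h1 h2
    have hzyβ' : z β' = y β' :=
      hzy β' (le_trans hIL1 h1) (lt_of_lt_of_le h2 hIL2.le)
    rw [hzyβ', hw3 β β' h1 h2]

end Comb

section Ideal
variable {κ : Cardinal.{0}}

lemma nwd_mono {A B : Set (GenCantor κ)} (hA : IsNwd κ A) (hBA : B ⊆ A) : IsNwd κ B := by
  intro δ hδ σ
  obtain ⟨δ', h1, h2, σ', h3, h4⟩ := hA δ hδ σ
  refine ⟨δ', h1, h2, σ', h3, ?_⟩
  exact Set.eq_empty_of_subset_empty (h4 ▸ Set.inter_subset_inter_right _ hBA)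

lemma meager_subset {A B : Set (GenCantor κ)} (hA : IsKMeager κ A) (hBA : B ⊆ A) :
    IsKMeager κ B := by
  obtain ⟨C, hC, rfl⟩ := hA
  refine ⟨fun i => C i ∩ B, fun i => nwd_mono (hC i) (Set.inter_subset_left), ?_⟩
  apply Set.Subset.antisymm
  · intro b hb
    obtain ⟨i, hi⟩ := Set.mem_iUnion.mp (hBA hb)
    exact Set.mem_iUnion.mpr ⟨i, hi, hb⟩
  · exact Set.iUnion_subset (fun i => Set.inter_subset_right)

lemma small_meager (hκ : ℵ₀ ≤ κ) {X : Set (GenCantor κ)}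
    (hX : #X ≤ Cardinal.lift.{1} κ) : IsKMeager κ X := by
  classical
  have hsing : ∀ z : GenCantor κ, IsNwd κ {z} := by
    intro z δ hδ σ
    refine ⟨δ + 1, (lt_add_one' δ).le, succ_lt_ord hκ hδ,
      fun β => if β = δ then !(z ⟨δ, hδ⟩) else σ β, fun β hβ => if_neg (ne_of_lt hβ), ?_⟩
    rw [Set.eq_empty_iff_forall_notMem]
    rintro w ⟨hwc, hwz⟩
    rw [Set.mem_singleton_iff] at hwz
    have h1 : w ⟨δ, hδ⟩ = if δ = δ then !(z ⟨δ, hδ⟩) else σ δ := hwc ⟨δ, hδ⟩ (lt_add_one' δ)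
    rw [if_pos rfl, hwz] at h1
    exact (Bool.not_ne_self (z ⟨δ, hδ⟩)) h1.symm
  rcases Set.eq_empty_or_nonempty X with rfl | ⟨x0, hx0⟩
  · exact ⟨fun _ => ∅, fun i => nwd_mono (hsing (fun _ => false)) (Set.empty_subset _),
      by simp⟩
  · have hXI : #X ≤ #(Idx κ) := by
      rwa [Ordinal.mk_Iio_ordinal, Cardinal.card_ord]
    obtain ⟨f⟩ := Cardinal.le_def _ _ |>.mp hXI
    set g : Idx κ → GenCantor κ := fun i =>
      if h : ∃ x : X, f x = i then h.choose.1 else x0 with hg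
    have hgX : ∀ i, g i ∈ X := by
      intro i
      show (if h : ∃ x : X, f x = i then (h.choose.1 : GenCantor κ) else x0) ∈ X
      by_cases h : ∃ x : X, f x = i
      · rw [dif_pos h]; exact h.choose.2
      · rw [dif_neg h]; exact hx0
    refine ⟨fun i => {g i}, fun i => hsing (g i), ?_⟩
    apply Set.Subset.antisymm
    · intro x hx
      refine Set.mem_iUnion.mpr ⟨f ⟨x, hx⟩, ?_⟩
      rw [Set.mem_singleton_iff]
      show x = if h : ∃ x' : X, f x' = f ⟨x, hx⟩ then (h.choose.1 : GenCantor κ) else x0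
      have hex : ∃ x' : X, f x' = f ⟨x, hx⟩ := ⟨⟨x, hx⟩, rfl⟩
      rw [dif_pos hex]
      have := f.injective hex.choose_spec
      rw [this]
    · exact Set.iUnion_subset (fun i w hw => hw ▸ hgX i)

lemma univ_not_meager (hinacc : κ.IsInaccessible) : ¬ IsKMeager κ (Set.univ : Set (GenCantor κ)) := by
  intro h
  obtain ⟨x, I, hd⟩ := char_hard hinacc h
  have hx : x ∈ MatchSet κ x I ∩ Set.univ :=
    ⟨matches_self hinacc.isRegular.aleph0_le x I, trivial⟩
  rw [hd] at hx
  exact hx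

lemma not_meager_inter_matchSet (hinacc : κ.IsInaccessible) {X : Set (GenCantor κ)}
    (hX : ¬ IsKMeager κ X) (x : GenCantor κ) (I : IntervalPartition κ) :
    ∃ y ∈ X, y ∈ MatchSet κ x I := by
  by_contra h
  push_neg at h
  refine hX (meager_subset (matchSet_compl_meager hinacc.isRegular.aleph0_le x I) ?_)
  intro y hy
  exact h y hy

end Ideal

section Ineq
variable {κ : Cardinal.{0}}

/-- The family of singletons: a witness for `covM`. -/
lemma singletons_witness (hinacc : κ.IsInaccessible) :
    (∀ A ∈ Set.range (fun x : GenCantor κ => ({x} : Set (GenCantor κ))), IsKMeager κ A) ∧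
    ⋃₀ Set.range (fun x : GenCantor κ => ({x} : Set (GenCantor κ))) = Set.univ := by
  have hκ : ℵ₀ ≤ κ := hinacc.isRegular.aleph0_le
  constructor
  · rintro A ⟨x, rfl⟩
    refine small_meager hκ ?_
    rw [Cardinal.mk_singleton]
    exact le_trans Cardinal.one_le_aleph0 (Cardinal.aleph0_le_lift.mpr hκ)
  · rw [Set.eq_univ_iff_forall]
    intro x
    exact ⟨{x}, ⟨x, rfl⟩, rfl⟩

lemma addM_le_covM (hinacc : κ.IsInaccessible) : addM κ ≤ covM κ := by
  unfold addM covM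
  refine le_csInf ⟨_, _, (singletons_witness hinacc).1, (singletons_witness hinacc).2, rfl⟩ ?_
  rintro c ⟨J, hJm, hJu, rfl⟩
  refine csInf_le (OrderBot.bddBelow _) ⟨J, hJm, ?_, rfl⟩
  rw [hJu]
  exact univ_not_meager hinacc

lemma addM_le_bK (hinacc : κ.IsInaccessible) : addM κ ≤ bK κ := by
  have hreg : κ.IsRegular := hinacc.isRegular
  have hκ : ℵ₀ ≤ κ := hreg.aleph0_le
  unfold bK
  refine le_csInf ⟨_, Set.univ, fun g => ⟨g, trivial, ?_⟩, rfl⟩ ?_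
  · rintro ⟨α, hα⟩
    exact lt_irrefl _ (hα ⟨α.1 + 1, succ_lt_ord hκ α.2⟩ (lt_add_one' α.1))
  rintro c ⟨F, hF, rfl⟩
  set x0 : GenCantor κ := fun _ => false with hx0
  refine le_trans ?_ (Cardinal.mk_image_le
    (f := fun f : GenBaire κ => (MatchSet κ x0 (ipOf hreg f))ᶜ) (s := F))
  unfold addM
  refine csInf_le (OrderBot.bddBelow _) ⟨_, ?_, ?_, rfl⟩
  · rintro A ⟨f, hf, rfl⟩
    exact matchSet_compl_meager hκ x0 (ipOf hreg f)
  · intro hU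
    obtain ⟨y, K, hd⟩ := char_hard hinacc hU
    set g : GenBaire κ := fun β =>
      (⟨K.pts (β.1 + 1), K.lt_ord _ (succ_lt_ord hκ β.2)⟩ : Idx κ) with hg
    obtain ⟨f, hfF, hnd⟩ := hF g
    refine hnd ?_
    have hsub : MatchSet κ y K ⊆ MatchSet κ x0 (ipOf hreg f) := by
      intro z hzM
      by_contra hz
      have hzU : z ∈ ⋃₀ ((fun f : GenBaire κ => (MatchSet κ x0 (ipOf hreg f))ᶜ) '' F) :=
        ⟨(MatchSet κ x0 (ipOf hreg f))ᶜ, ⟨f, hfF, rfl⟩, hz⟩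
      have hmem : z ∈ MatchSet κ y K ∩
          ⋃₀ ((fun f : GenBaire κ => (MatchSet κ x0 (ipOf hreg f))ᶜ) '' F) := ⟨hzM, hzU⟩
      rw [hd] at hmem
      exact hmem
    obtain ⟨γ, hγκ, hγ⟩ := ip_dom_of_matchSet_subset hreg hsub
    refine ⟨⟨γ, hγκ⟩, ?_⟩
    intro β hβ
    obtain ⟨α, hακ, h1', h2'⟩ := hγ β.1 (le_of_lt hβ) β.2
    show (f β).1 < (g β).1
    have h3 : (f β).1 < (ipOf hreg f).pts (α + 1) :=
      ipOf_spec hreg f hακ β (le_trans (K.le_pts β.1 β.2) h1')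
    exact lt_of_lt_of_le h3 h2'

lemma min_le_addM (hinacc : κ.IsInaccessible) : min (bK κ) (covM κ) ≤ addM κ := by
  classical
  have hreg : κ.IsRegular := hinacc.isRegular
  have hκ : ℵ₀ ≤ κ := hreg.aleph0_le
  unfold addM
  refine le_csInf ⟨_, _, (singletons_witness hinacc).1,
    by rw [(singletons_witness hinacc).2]; exact univ_not_meager hinacc, rfl⟩ ?_
  rintro c ⟨J, hJm, hJnm, rfl⟩
  by_contra hlt
  push_neg at hlt
  rw [lt_min_iff] at hlt
  obtain ⟨hb, hcov⟩ := hlt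
  apply hJnm
  have hch : ∀ A : ↥J, ∃ x : GenCantor κ, ∃ I : IntervalPartition κ,
      MatchSet κ x I ∩ A.1 = ∅ := fun A => char_hard hinacc (hJm A.1 A.2)
  set xA : ↥J → GenCantor κ := fun A => (hch A).choose with hxA
  set IA : ↥J → IntervalPartition κ := fun A => (hch A).choose_spec.choose with hIA
  have hAdisj : ∀ A : ↥J, MatchSet κ (xA A) (IA A) ∩ A.1 = ∅ :=
    fun A => (hch A).choose_spec.choose_spec
  -- cov step: a real matching all the chopped pairs
  have hy : ∃ y : GenCantor κ, ∀ A : ↥J, y ∈ MatchSet κ (xA A) (IA A) := by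
    by_contra h
    push_neg at h
    have hcov2 : covM κ ≤ #(Set.range (fun A : ↥J => (MatchSet κ (xA A) (IA A))ᶜ)) := by
      unfold covM
      refine csInf_le (OrderBot.bddBelow _) ⟨_, ?_, ?_, rfl⟩
      · rintro B ⟨A, rfl⟩
        exact matchSet_compl_meager hκ _ _
      · rw [Set.eq_univ_iff_forall]
        intro y
        obtain ⟨A, hA⟩ := h y
        exact ⟨_, ⟨A, rfl⟩, hA⟩
    exact absurd (lt_of_le_of_lt (hcov2.trans Cardinal.mk_range_le) hcov) (lt_irrefl _)
  obtain ⟨y, hy⟩ := hy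
  -- b step: a function dominating all the extracted functions
  set hf : ↥J → GenBaire κ := fun A => (comb hreg (hy A)).choose with hhf
  have hg : ∃ g : GenBaire κ, ∀ A : ↥J, EvDom κ (hf A) g := by
    by_contra h
    push_neg at h
    have hbK : bK κ ≤ #(Set.range hf) := by
      unfold bK
      refine csInf_le (OrderBot.bddBelow _) ⟨Set.range hf, ?_, rfl⟩
      intro g
      obtain ⟨A, hA⟩ := h g
      exact ⟨hf A, ⟨A, rfl⟩, hA⟩
    exact absurd (lt_of_le_of_lt (hbK.trans Cardinal.mk_range_le) hb) (lt_irrefl _)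
  obtain ⟨g, hg⟩ := hg
  refine char_easy hκ y (ipOf hreg g) ?_
  rw [Set.eq_empty_iff_forall_notMem]
  rintro z ⟨hzM, hzU⟩
  obtain ⟨A, hAJ, hzA⟩ := hzU
  have h1 : z ∈ MatchSet κ (xA ⟨A, hAJ⟩) (IA ⟨A, hAJ⟩) :=
    (comb hreg (hy ⟨A, hAJ⟩)).choose_spec g (hg ⟨A, hAJ⟩) hzM
  have h2 : z ∈ MatchSet κ (xA ⟨A, hAJ⟩) (IA ⟨A, hAJ⟩) ∩ A := ⟨h1, hzA⟩
  rw [hAdisj ⟨A, hAJ⟩] at h2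
  exact h2

end Ineq

section Cof
variable {κ : Cardinal.{0}}

lemma max_le_cofM (hinacc : κ.IsInaccessible) : max (dK κ) (nonM κ) ≤ cofM κ := by
  classical
  have hreg : κ.IsRegular := hinacc.isRegular
  have hκ : ℵ₀ ≤ κ := hreg.aleph0_le
  unfold cofM
  refine le_csInf ⟨_, {A | IsKMeager κ A}, fun A hA => hA,
    fun A hA => ⟨A, hA, Set.Subset.rfl⟩, rfl⟩ ?_
  rintro c ⟨J, hJm, hJcof, rfl⟩
  rw [max_le_iff]
  have hch : ∀ A : ↥J, ∃ x : GenCantor κ, ∃ I : IntervalPartition κ,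
      MatchSet κ x I ∩ A.1 = ∅ := fun A => char_hard hinacc (hJm A.1 A.2)
  set xA : ↥J → GenCantor κ := fun A => (hch A).choose with hxA
  set IA : ↥J → IntervalPartition κ := fun A => (hch A).choose_spec.choose with hIA
  have hAdisj : ∀ A : ↥J, MatchSet κ (xA A) (IA A) ∩ A.1 = ∅ :=
    fun A => (hch A).choose_spec.choose_spec
  constructor
  · -- dominating family from the cofinal family
    unfold dK
    set fA : ↥J → GenBaire κ := fun A => fun β =>
      (⟨(IA A).pts (β.1 + 1), (IA A).lt_ord _ (succ_lt_ord hκ β.2)⟩ : Idx κ) with hfA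
    refine le_trans (csInf_le (OrderBot.bddBelow _) ⟨Set.range fA, ?_, rfl⟩)
      Cardinal.mk_range_le
    intro g
    set x0 : GenCantor κ := fun _ => false with hx0
    obtain ⟨B, hBJ, hMB⟩ := hJcof _ (matchSet_compl_meager hκ x0 (ipOf hreg g))
    refine ⟨fA ⟨B, hBJ⟩, ⟨⟨B, hBJ⟩, rfl⟩, ?_⟩
    have hsub : MatchSet κ (xA ⟨B, hBJ⟩) (IA ⟨B, hBJ⟩) ⊆ MatchSet κ x0 (ipOf hreg g) := by
      intro z hz
      by_contra hznM
      have hzB : z ∈ B := hMB hznM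
      have hmem : z ∈ MatchSet κ (xA ⟨B, hBJ⟩) (IA ⟨B, hBJ⟩) ∩ B := ⟨hz, hzB⟩
      rw [hAdisj ⟨B, hBJ⟩] at hmem
      exact hmem
    obtain ⟨γ, hγκ, hγ⟩ := ip_dom_of_matchSet_subset hreg hsub
    refine ⟨⟨γ, hγκ⟩, ?_⟩
    intro β hβ
    obtain ⟨α, hακ, h1', h2'⟩ := hγ β.1 (le_of_lt hβ) β.2
    show (g β).1 < (fA ⟨B, hBJ⟩ β).1
    have h3 : (g β).1 < (ipOf hreg g).pts (α + 1) :=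
      ipOf_spec hreg g hακ β (le_trans ((IA ⟨B, hBJ⟩).le_pts β.1 β.2) h1')
    exact lt_of_lt_of_le h3 h2'
  · -- a non-meager set of diagonal points
    unfold nonM
    have hne : ∀ A : ↥J, ∃ z : GenCantor κ, z ∉ A.1 := by
      intro A
      by_contra h
      push_neg at h
      refine univ_not_meager hinacc ?_
      have hu : A.1 = Set.univ := Set.eq_univ_iff_forall.mpr h
      rw [← hu]
      exact hJm A.1 A.2
    set zA : ↥J → GenCantor κ := fun A => (hne A).choose with hzA
    refine le_trans (csInf_le (OrderBot.bddBelow _) ⟨Set.range zA, ?_, rfl⟩)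
      Cardinal.mk_range_le
    intro hmeag
    obtain ⟨B, hBJ, hsub⟩ := hJcof _ hmeag
    exact (hne ⟨B, hBJ⟩).choose_spec (hsub ⟨⟨B, hBJ⟩, rfl⟩)

lemma cofM_le_max (hinacc : κ.IsInaccessible) : cofM κ ≤ max (dK κ) (nonM κ) := by
  classical
  have hreg : κ.IsRegular := hinacc.isRegular
  have hκ : ℵ₀ ≤ κ := hreg.aleph0_le
  -- attained witnesses for dK and nonM
  have hSd : dK κ ∈ { c : Cardinal.{1} | ∃ F : Set (GenBaire κ),
      (∀ g : GenBaire κ, ∃ f ∈ F, EvDom κ g f) ∧ c = #F } := by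
    refine csInf_mem ⟨_, Set.univ, fun g =>
      ⟨fun β => ⟨(g β).1 + 1, succ_lt_ord hκ (g β).2⟩, trivial,
        ⟨0, ord_pos hκ⟩, fun β _ => lt_add_one' (g β).1⟩, rfl⟩
  have hSn : nonM κ ∈ { c : Cardinal.{1} | ∃ X : Set (GenCantor κ),
      ¬ IsKMeager κ X ∧ c = #X } :=
    csInf_mem ⟨_, Set.univ, univ_not_meager hinacc, rfl⟩
  obtain ⟨F, hFdom, hFc⟩ := hSd
  obtain ⟨X, hXnm, hXc⟩ := hSn
  have h1 : cofM κ ≤ #(Set.range (fun p : ↥X × ↥F =>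
      (MatchSet κ p.1.1 (ipOf hreg p.2.1))ᶜ)) := by
    unfold cofM
    refine csInf_le (OrderBot.bddBelow _) ⟨_, ?_, ?_, rfl⟩
    · rintro B ⟨p, rfl⟩
      exact matchSet_compl_meager hκ _ _
    · intro A hA
      obtain ⟨x, I, hd⟩ := char_hard hinacc hA
      obtain ⟨y, hyX, hyM⟩ := not_meager_inter_matchSet hinacc hXnm x I
      obtain ⟨gg, hggF, hdom⟩ := hFdom (comb hreg hyM).choose
      refine ⟨(MatchSet κ y (ipOf hreg gg))ᶜ, ⟨(⟨y, hyX⟩, ⟨gg, hggF⟩), rfl⟩, ?_⟩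
      have hsub : MatchSet κ y (ipOf hreg gg) ⊆ MatchSet κ x I :=
        (comb hreg hyM).choose_spec gg hdom
      intro z hzA hzM
      have hmem : z ∈ MatchSet κ x I ∩ A := ⟨hsub hzM, hzA⟩
      rw [hd] at hmem
      exact hmem
  have h2 : #(Set.range (fun p : ↥X × ↥F =>
      (MatchSet κ p.1.1 (ipOf hreg p.2.1))ᶜ)) ≤ #(↥X × ↥F) := Cardinal.mk_range_le
  have h3 : #(↥X × ↥F) = #↥X * #↥F := by
    rw [Cardinal.mk_prod, Cardinal.lift_id, Cardinal.lift_id]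
  have hnon : ℵ₀ ≤ nonM κ := by
    rw [hXc]
    by_contra h
    push_neg at h
    exact hXnm (small_meager hκ (le_trans h.le (Cardinal.aleph0_le_lift.mpr hκ)))
  have hd0 : dK κ ≠ 0 := by
    rw [hFc]
    intro h0
    rw [Cardinal.mk_eq_zero_iff] at h0
    obtain ⟨f, hfF, _⟩ := hFdom (fun β => β)
    exact h0.false ⟨f, hfF⟩
  calc cofM κ ≤ #↥X * #↥F := h1.trans (h2.trans_eq h3)
  _ = nonM κ * dK κ := by rw [hXc, hFc]
  _ = max (nonM κ) (dK κ) := Cardinal.mul_eq_max_of_aleph0_le_left hnon hd0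
  _ = max (dK κ) (nonM κ) := max_comm _ _

end Cof

theorem addM_eq_min_and_cofM_eq_max (κ : Cardinal.{0}) (hinacc : κ.IsInaccessible) :
    addM κ = min (bK κ) (covM κ) ∧ cofM κ = max (dK κ) (nonM κ) :=
  ⟨le_antisymm (le_min (addM_le_bK hinacc) (addM_le_covM hinacc)) (min_le_addM hinacc),
   le_antisymm (cofM_le_max hinacc) (max_le_cofM hinacc)⟩

end GenCichon
end

section
/- Let κ be a weakly inaccessible cardinal and let h ∈ κ^κ with lim_{α→κ} h(α) = κ. Then 𝔟_h(∈*) ≤ 𝔟_h(p∈*) ≤ 𝔟_κ and 𝔡_κ ≤ 𝔡_h(p∈*) ≤ 𝔡_h(∈*). -/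
namespace GenCichon

open Cardinal Set Ordinal

section Aux

variable {κ : Cardinal.{0}}

lemma sup_lt_of_small (hreg : κ.IsRegular) (S : Set Ordinal.{0})
    (hS : ∀ s ∈ S, s < κ.ord) (hc : #S < Cardinal.lift.{1} κ) : sSup S < κ.ord := by
  rcases S.eq_empty_or_nonempty with rfl | hne
  · rw [csSup_empty]
    simpa [Ordinal.bot_eq_zero] using
      (Cardinal.lt_ord.mpr (by simpa using hreg.pos) : (0:Ordinal) < κ.ord)
  · obtain ⟨c, hc'⟩ := Cardinal.mem_range_lift_of_le hc.le
    have hce : Cardinal.lift.{1} #c.out = #S := by rwa [Cardinal.mk_out]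
    have hlt : #c.out < κ := by
      have := hc' ▸ hc
      rwa [Cardinal.lift_lt, Cardinal.mk_out] at *
    obtain ⟨e⟩ : Nonempty (c.out ≃ S) := by
      rw [← Cardinal.lift_mk_eq']; simpa using hce
    set f : c.out → Ordinal.{0} := fun i => (e i).1 with hf
    have hsup : iSup f < κ.ord :=
      Cardinal.iSup_lt_ord_of_isRegular hreg hlt (fun i => hS _ (e i).2)
    refine lt_of_le_of_lt (csSup_le hne fun s hs => ?_) hsup
    have : s = f (e.symm ⟨s, hs⟩) := by simp [hf]
    rw [this]
    exact le_ciSup (Ordinal.bddAbove_range f) _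

lemma mk_Idx : #(Idx κ) = Cardinal.lift.{1} κ := by
  simpa [Cardinal.card_ord] using Ordinal.mk_Iio_ordinal κ.ord

lemma card_lt_of_bdd {b : Ordinal} (hb : b < κ.ord) (T : Set (Idx κ))
    (hT : ∀ t ∈ T, t.1 < b) : #T < Cardinal.lift.{1} κ := by
  have hle : #T ≤ #(Set.Iio b) := by
    refine Cardinal.mk_le_of_injective
      (f := fun t : T => (⟨t.1.1, hT t.1 t.2⟩ : Set.Iio b)) ?_
    intro x y hxy
    simp only [Subtype.mk.injEq] at hxy
    exact Subtype.ext (Subtype.ext (congrArg (fun z : Set.Iio b => z.1) hxy))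
  refine hle.trans_lt ?_
  rw [Ordinal.mk_Iio_ordinal]
  exact Cardinal.lift_lt.2 (Cardinal.lt_ord.1 hb)

lemma idx_bdd_of_small (hreg : κ.IsRegular) (T : Set (Idx κ))
    (h : #T < Cardinal.lift.{1} κ) : ∃ b < κ.ord, ∀ t ∈ T, t.1 < b := by
  set S : Set Ordinal.{0} := (fun t : Idx κ => Order.succ t.1) '' T with hSdef
  have hlim := Cardinal.isSuccLimit_ord hreg.aleph0_le
  have hS : ∀ s ∈ S, s < κ.ord := by
    rintro s ⟨t, -, rfl⟩
    exact hlim.succ_lt t.2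
  refine ⟨sSup S, sup_lt_of_small hreg S hS (Cardinal.mk_image_le.trans_lt h), ?_⟩
  intro t ht
  have : Order.succ t.1 ≤ sSup S :=
    le_csSup ⟨κ.ord, fun s hs => (hS s hs).le⟩ ⟨t, ht, rfl⟩
  exact lt_of_lt_of_le (Order.lt_succ_of_le le_rfl) this

/-- The monotone (running supremum) majorant of `f`. -/
noncomputable def upFn (hreg : κ.IsRegular) (f : GenBaire κ) : GenBaire κ := fun α =>
  ⟨sSup ((fun β : Idx κ => (f β).1) '' {β | β ≤ α}), by
    apply sup_lt_of_small hreg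
    · rintro s ⟨β, -, rfl⟩; exact (f β).2
    · refine Cardinal.mk_image_le.trans_lt ?_
      refine card_lt_of_bdd ((Cardinal.isSuccLimit_ord hreg.aleph0_le).succ_lt α.2) _ ?_
      intro t ht
      exact Order.lt_succ_of_le ht⟩

lemma le_upFn (hreg : κ.IsRegular) (f : GenBaire κ) {β α : Idx κ} (h : β ≤ α) :
    (f β).1 ≤ (upFn hreg f α).1 :=
  le_csSup ⟨κ.ord, by rintro s ⟨γ, -, rfl⟩; exact (f γ).2.le⟩ ⟨β, h, rfl⟩

lemma upFn_mono (hreg : κ.IsRegular) (f : GenBaire κ) {α α' : Idx κ} (h : α ≤ α') :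
    (upFn hreg f α).1 ≤ (upFn hreg f α').1 := by
  refine csSup_le_csSup ⟨κ.ord, by rintro s ⟨γ, -, rfl⟩; exact (f γ).2.le⟩
    ⟨(f α).1, ⟨α, show α ≤ α from le_rfl, rfl⟩⟩ (Set.image_mono ?_)
  intro β hβ
  exact le_trans hβ h

lemma not_evDom_upFn (hreg : κ.IsRegular) {f g : GenBaire κ}
    (hfg : ¬ EvDom κ f g) : ¬ EvDom κ (upFn hreg f) g := by
  rintro ⟨α, hα⟩
  refine hfg ⟨α, fun β hβ => ?_⟩
  have h1 : (f β).1 ≤ (upFn hreg f β).1 := le_upFn hreg f le_rfl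
  have h2 : (upFn hreg f β).1 < (g β).1 := hα β hβ
  exact lt_of_le_of_lt h1 h2

lemma exists_nxt {D : Set (Idx κ)} (hD : #D = Cardinal.lift.{1} κ) (α : Idx κ) :
    ∃ d, d ∈ D ∧ α ≤ d := by
  by_contra hcon
  push_neg at hcon
  have : #D < Cardinal.lift.{1} κ := by
    refine card_lt_of_bdd α.2 D ?_
    intro t ht
    exact Subtype.coe_lt_coe.2 (hcon t ht)
  rw [hD] at this
  exact absurd this (lt_irrefl _)

/-- The least (well, some) element of the domain of `φ` at or above `α`. -/
noncomputable def nxt {h : GenBaire κ} (φ : PartialSlalom κ h) (α : Idx κ) : Idx κ :=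
  (exists_nxt φ.dom_card α).choose

lemma nxt_mem {h : GenBaire κ} (φ : PartialSlalom κ h) (α : Idx κ) :
    nxt φ α ∈ φ.dom := (exists_nxt φ.dom_card α).choose_spec.1

lemma le_nxt {h : GenBaire κ} (φ : PartialSlalom κ h) (α : Idx κ) :
    α ≤ nxt φ α := (exists_nxt φ.dom_card α).choose_spec.2

/-- The dominating function read off from a partial slalom. -/
noncomputable def gOf (hreg : κ.IsRegular) {h : GenBaire κ} (φ : PartialSlalom κ h) :
    GenBaire κ := fun α =>
  ⟨sSup ((fun γ : Idx κ => Order.succ γ.1) '' φ.fn (nxt φ α)), by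
    apply sup_lt_of_small hreg
    · rintro s ⟨γ, -, rfl⟩
      exact (Cardinal.isSuccLimit_ord hreg.aleph0_le).succ_lt γ.2
    · refine Cardinal.mk_image_le.trans_lt ?_
      rw [φ.fn_card _ (nxt_mem φ α)]
      exact Cardinal.lift_lt.2 (Cardinal.lt_ord.1 (h (nxt φ α)).2)⟩

lemma succ_le_gOf (hreg : κ.IsRegular) {h : GenBaire κ} (φ : PartialSlalom κ h)
    {α x : Idx κ} (hx : x ∈ φ.fn (nxt φ α)) :
    Order.succ x.1 ≤ (gOf hreg φ α).1 :=
  le_csSup ⟨κ.ord, by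
    rintro s ⟨γ, -, rfl⟩
    exact ((Cardinal.isSuccLimit_ord hreg.aleph0_le).succ_lt γ.2).le⟩ ⟨x, hx, rfl⟩

lemma zero_lt_ord (hreg : κ.IsRegular) : (0 : Ordinal) < κ.ord :=
  Cardinal.lt_ord.2 (by simpa using hreg.pos)

lemma one_lt_ord (hreg : κ.IsRegular) : (1 : Ordinal) < κ.ord :=
  Cardinal.lt_ord.2 (by simpa using Cardinal.one_lt_aleph0.trans_le hreg.aleph0_le)

/-- The set of indices below `c`. -/
def baseSet (c : Idx κ) : Set (Idx κ) := { x | x.1 < c.1 }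

lemma mk_baseSet (c : Idx κ) : #(baseSet c) = Cardinal.lift.{1} c.1.card := by
  have e : baseSet c ≃ Set.Iio c.1 :=
    { toFun := fun x => ⟨x.1.1, x.2⟩
      invFun := fun y => ⟨⟨y.1, show y.1 < κ.ord from lt_trans y.2 c.2⟩,
        show (y.1 : Ordinal) < (c.1 : Ordinal) from y.2⟩
      left_inv := fun x => by ext; rfl
      right_inv := fun y => by ext; rfl }
  rw [Cardinal.mk_congr e, Ordinal.mk_Iio_ordinal]

open scoped Classical in
/-- A total `h`-slalom localizing `f`. -/
noncomputable def slalomFor (hreg : κ.IsRegular) (h f : GenBaire κ) :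
    Idx κ → Set (Idx κ) := fun β =>
  if f β ∈ baseSet (h β) then baseSet (h β)
  else if h0 : (0 : Ordinal) < (h β).1 then
    insert (f β) (baseSet (h β) \ {⟨0, zero_lt_ord hreg⟩})
  else ∅

lemma isSlalom_slalomFor (hreg : κ.IsRegular) (h f : GenBaire κ) :
    IsSlalom κ h (slalomFor hreg h f) := by
  intro β
  unfold slalomFor
  by_cases hmem : f β ∈ baseSet (h β)
  · rw [if_pos hmem, mk_baseSet]
  · rw [if_neg hmem]
    by_cases h0 : (0 : Ordinal) < (h β).1
    · rw [dif_pos h0]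
      set z : Idx κ := ⟨0, zero_lt_ord hreg⟩ with hz
      have hzmem : z ∈ baseSet (h β) := h0
      have h1 : f β ∉ baseSet (h β) \ {z} := fun hx => hmem hx.1
      have h2 : z ∉ baseSet (h β) \ {z} := fun hx => hx.2 rfl
      have h3 : insert z (baseSet (h β) \ {z}) = baseSet (h β) := by
        rw [Set.insert_diff_singleton, Set.insert_eq_of_mem hzmem]
      rw [Cardinal.mk_insert h1, ← Cardinal.mk_insert h2, h3, mk_baseSet]
    · rw [dif_neg h0]
      have : (h β).1 = 0 := le_antisymm (not_lt.1 h0) zero_le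
      simp [this]

lemma localizes_slalomFor (hreg : κ.IsRegular) {h : GenBaire κ} (hh : TendsToTop κ h)
    (f : GenBaire κ) : Localizes κ (slalomFor hreg h f) f := by
  obtain ⟨α₀, hα₀⟩ := hh ⟨1, one_lt_ord hreg⟩
  refine card_lt_of_bdd α₀.2 _ ?_
  intro t ht
  by_contra hcon
  have hle : α₀ ≤ t := by
    have := not_lt.1 hcon
    exact Subtype.coe_le_coe.1 this
  have h1 : (1 : Ordinal) ≤ (h t).1 := Subtype.coe_le_coe.2 (hα₀ t hle)
  have h0 : (0 : Ordinal) < (h t).1 := lt_of_lt_of_le zero_lt_one h1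
  have : f t ∈ slalomFor hreg h f t := by
    unfold slalomFor
    by_cases hmem : f t ∈ baseSet (h t)
    · rw [if_pos hmem]; exact hmem
    · rw [if_neg hmem, dif_pos h0]
      exact Set.mem_insert _ _
  exact ht this

lemma not_evDom_self (hreg : κ.IsRegular) (g : GenBaire κ) : ¬ EvDom κ g g := by
  rintro ⟨α, hα⟩
  have hβ : Order.succ α.1 < κ.ord := (Cardinal.isSuccLimit_ord hreg.aleph0_le).succ_lt α.2
  have : α < (⟨Order.succ α.1, hβ⟩ : Idx κ) :=
    Subtype.coe_lt_coe.1 (Order.lt_succ_of_le le_rfl)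
  exact absurd (hα _ this) (lt_irrefl _)

lemma exists_not_ploc (hreg : κ.IsRegular) {h : GenBaire κ} (φ : PartialSlalom κ h) :
    ∃ f : GenBaire κ, ¬ PLocalizes κ φ f := by
  have hne : ∀ α : Idx κ, ((φ.fn α)ᶜ : Set (Idx κ)).Nonempty := by
    intro α
    by_cases hd : α ∈ φ.dom
    · rw [Set.nonempty_iff_ne_empty]
      intro hcon
      rw [Set.compl_empty_iff] at hcon
      have h1 : #(φ.fn α) = Cardinal.lift.{1} κ := by rw [hcon, Cardinal.mk_univ, mk_Idx]
      have h2 := φ.fn_card α hd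
      rw [h1] at h2
      have h3 : Cardinal.lift.{1} (h α).1.card < Cardinal.lift.{1} κ :=
        Cardinal.lift_lt.2 (Cardinal.lt_ord.1 (h α).2)
      rw [← h2] at h3
      exact absurd h3 (lt_irrefl _)
    · rw [φ.eq_empty_of_not_mem α hd, Set.compl_empty]
      exact ⟨⟨0, zero_lt_ord hreg⟩, Set.mem_univ _⟩
  refine ⟨fun α => (hne α).some, ?_⟩
  intro hcon
  unfold PLocalizes at hcon
  have hEq : { α : Idx κ | α ∈ φ.dom ∧ (hne α).some ∉ φ.fn α } = φ.dom := by
    ext α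
    exact ⟨fun hx => hx.1, fun hx => ⟨hx, (hne α).some_mem⟩⟩
  rw [hEq, φ.dom_card] at hcon
  exact absurd hcon (lt_irrefl _)

/-- A total slalom viewed as a partial slalom with full domain. -/
noncomputable def t2p {h : GenBaire κ} (φ : Idx κ → Set (Idx κ)) (hφ : IsSlalom κ h φ) :
    PartialSlalom κ h where
  dom := Set.univ
  dom_card := by rw [Cardinal.mk_univ, mk_Idx]
  fn := φ
  fn_card := fun α _ => hφ α
  eq_empty_of_not_mem := fun α hα => absurd (Set.mem_univ α) hα

lemma ploc_t2p {h : GenBaire κ} {φ : Idx κ → Set (Idx κ)} (hφ : IsSlalom κ h φ)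
    (f : GenBaire κ) : PLocalizes κ (t2p φ hφ) f ↔ Localizes κ φ f := by
  unfold PLocalizes Localizes t2p
  simp

lemma part1 (hreg : κ.IsRegular) (h : GenBaire κ) : bLoc κ h ≤ bPLoc κ h := by
  unfold bLoc bPLoc
  refine csInf_le_csInf (OrderBot.bddBelow _) ?_ ?_
  · refine ⟨#(Set.univ : Set (GenBaire κ)), Set.univ, fun φ => ?_, rfl⟩
    obtain ⟨f, hf⟩ := exists_not_ploc hreg φ
    exact ⟨f, Set.mem_univ f, hf⟩
  · rintro c ⟨F, hF, rfl⟩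
    refine ⟨F, fun φ hφ => ?_, rfl⟩
    obtain ⟨f, hfF, hf⟩ := hF (t2p φ hφ)
    exact ⟨f, hfF, fun hl => hf ((ploc_t2p hφ f).2 hl)⟩

lemma part2 (hreg : κ.IsRegular) (h : GenBaire κ) : bPLoc κ h ≤ bK κ := by
  unfold bK
  refine le_csInf ⟨#(Set.univ : Set (GenBaire κ)), Set.univ,
    fun g => ⟨g, Set.mem_univ g, not_evDom_self hreg g⟩, rfl⟩ ?_
  rintro c ⟨F, hF, rfl⟩
  have hmem : ∀ φ : PartialSlalom κ h, ∃ f' ∈ upFn hreg '' F, ¬ PLocalizes κ φ f' := by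
    intro φ
    obtain ⟨f, hfF, hf⟩ := hF (gOf hreg φ)
    refine ⟨upFn hreg f, Set.mem_image_of_mem _ hfF, ?_⟩
    intro hloc
    unfold PLocalizes at hloc
    obtain ⟨b, hb, hbd⟩ := idx_bdd_of_small hreg _ hloc
    unfold EvDom at hf
    push_neg at hf
    obtain ⟨β, hββ, hgf⟩ := hf ⟨b, hb⟩
    have hgf' : gOf hreg φ β ≤ f β := hgf
    set δ := nxt φ β with hδ
    have hδT : δ ∈ φ.dom ∧ upFn hreg f δ ∉ φ.fn δ := by
      refine ⟨nxt_mem φ β, fun hx => ?_⟩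
      have h1 : Order.succ (upFn hreg f δ).1 ≤ (gOf hreg φ β).1 := succ_le_gOf hreg φ hx
      have h2 : (gOf hreg φ β).1 ≤ (f β).1 := Subtype.coe_le_coe.2 hgf'
      have h3 : (f β).1 ≤ (upFn hreg f δ).1 := le_upFn hreg f (le_nxt φ β)
      exact absurd ((Order.lt_succ_of_le le_rfl).trans_le (h1.trans (h2.trans h3)))
        (lt_irrefl _)
    have hlt : δ.1 < b := hbd δ hδT
    have hlt2 : b < β.1 := Subtype.coe_lt_coe.2 hββ
    have hlt3 : β.1 ≤ δ.1 := Subtype.coe_le_coe.2 (le_nxt φ β)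
    exact absurd (hlt2.trans_le hlt3) (not_lt.2 hlt.le)
  calc bPLoc κ h ≤ #(upFn hreg '' F) :=
        csInf_le (OrderBot.bddBelow _) ⟨upFn hreg '' F, hmem, rfl⟩
    _ ≤ #F := Cardinal.mk_image_le

lemma part3 (hreg : κ.IsRegular) {h : GenBaire κ} (hh : TendsToTop κ h) :
    dK κ ≤ dPLoc κ h := by
  unfold dPLoc
  refine le_csInf ⟨#(Set.univ : Set (PartialSlalom κ h)), Set.univ, fun f =>
    ⟨t2p (slalomFor hreg h f) (isSlalom_slalomFor hreg h f), Set.mem_univ _,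
      (ploc_t2p _ f).2 (localizes_slalomFor hreg hh f)⟩, rfl⟩ ?_
  rintro c ⟨Φ, hΦ, rfl⟩
  have hdom : ∀ f : GenBaire κ, ∃ g ∈ gOf hreg '' Φ, EvDom κ f g := by
    intro f
    obtain ⟨φ, hφΦ, hloc⟩ := hΦ (upFn hreg f)
    unfold PLocalizes at hloc
    obtain ⟨b, hb, hbd⟩ := idx_bdd_of_small hreg _ hloc
    refine ⟨gOf hreg φ, Set.mem_image_of_mem _ hφΦ, ⟨b, hb⟩, fun β hβ => ?_⟩
    set δ := nxt φ β with hδ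
    have hmemfn : upFn hreg f δ ∈ φ.fn δ := by
      by_contra hx
      have hlt : δ.1 < b := hbd δ ⟨nxt_mem φ β, hx⟩
      have hlt2 : b < β.1 := Subtype.coe_lt_coe.2 hβ
      have hlt3 : β.1 ≤ δ.1 := Subtype.coe_le_coe.2 (le_nxt φ β)
      exact absurd (hlt2.trans_le hlt3) (not_lt.2 hlt.le)
    have h1 : (f β).1 ≤ (upFn hreg f β).1 := le_upFn hreg f le_rfl
    have h2 : (upFn hreg f β).1 ≤ (upFn hreg f δ).1 := upFn_mono hreg f (le_nxt φ β)
    have h3 : Order.succ (upFn hreg f δ).1 ≤ (gOf hreg φ β).1 := succ_le_gOf hreg φ hmemfn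
    have : (f β).1 < (gOf hreg φ β).1 :=
      lt_of_le_of_lt (h1.trans h2) (lt_of_lt_of_le (Order.lt_succ_of_le le_rfl) h3)
    exact Subtype.coe_lt_coe.1 this
  calc dK κ ≤ #(gOf hreg '' Φ) := csInf_le (OrderBot.bddBelow _) ⟨gOf hreg '' Φ, hdom, rfl⟩
    _ ≤ #Φ := Cardinal.mk_image_le

lemma part4 (hreg : κ.IsRegular) {h : GenBaire κ} (hh : TendsToTop κ h) :
    dPLoc κ h ≤ dLoc κ h := by
  unfold dPLoc dLoc
  refine csInf_le_csInf (OrderBot.bddBelow _) ?_ ?_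
  · exact ⟨#({φ | IsSlalom κ h φ} : Set (Idx κ → Set (Idx κ))), {φ | IsSlalom κ h φ},
      fun φ hφ => hφ,
      fun f => ⟨slalomFor hreg h f, isSlalom_slalomFor hreg h f,
        localizes_slalomFor hreg hh f⟩, rfl⟩
  · rintro c ⟨Φ, hΦ1, hΦ2, rfl⟩
    set F : ↥Φ → PartialSlalom κ h := fun φ => t2p φ.1 (hΦ1 φ.1 φ.2) with hFdef
    have hinj : Function.Injective F :=
      fun x y hxy => Subtype.ext (congrArg PartialSlalom.fn hxy)
    refine ⟨Set.range F, ?_, (Cardinal.mk_range_eq F hinj).symm⟩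
    intro f
    obtain ⟨φ, hφΦ, hloc⟩ := hΦ2 f
    exact ⟨F ⟨φ, hφΦ⟩, Set.mem_range_self _, (ploc_t2p _ f).2 hloc⟩

end Aux

theorem loc_between (κ : Cardinal.{0})
    (hreg : κ.IsRegular) (hunc : Cardinal.aleph0 < κ)
    (hlim : ∀ μ < κ, Order.succ μ < κ)
    (h : GenBaire κ) (hh : TendsToTop κ h) :
    (bLoc κ h ≤ bPLoc κ h ∧ bPLoc κ h ≤ bK κ) ∧
    (dK κ ≤ dPLoc κ h ∧ dPLoc κ h ≤ dLoc κ h) := by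
  exact ⟨⟨part1 hreg h, part2 hreg h⟩, ⟨part3 hreg hh, part4 hreg hh⟩⟩

end GenCichon
end

section
/- Assume κ is strongly inaccessible. Let X ⊆ 2^κ be a nonempty open set and let λ < κ be a cardinal. Then there is a family 𝒴 of open subsets of X such that (i) |𝒴| ≤ κ, (ii) every dense open subset of 2^κ contains a member of 𝒴, and (iii) ⋂𝒴' ≠ ∅ for every 𝒴' ⊆ 𝒴 with |𝒴'| ≤ λ. -/
namespace GenCichon

open Cardinal Set Ordinal


section Helpers

variable {κ : Cardinal.{0}}

/-- Cylinder of length `ℓ` around the point `z`. -/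
def Cyl (κ : Cardinal.{0}) (ℓ : Ordinal) (z : GenCantor κ) : Set (GenCantor κ) :=
  { y | ∀ β : Idx κ, β.1 < ℓ → y β = z β }

lemma self_mem_Cyl {ℓ : Ordinal} {z : GenCantor κ} : z ∈ Cyl κ ℓ z := fun _ _ => rfl

lemma Cyl_mono {ℓ ℓ' : Ordinal} {z z' : GenCantor κ} (h : ℓ ≤ ℓ')
    (hag : ∀ β : Idx κ, β.1 < ℓ → z' β = z β) : Cyl κ ℓ' z' ⊆ Cyl κ ℓ z :=
  fun _ hy β hβ => (hy β (lt_of_lt_of_le hβ h)).trans (hag β hβ)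

lemma bdd_of_small {c : Cardinal.{0}} (hreg : c.IsRegular) {ι : Type 1}
    (f : ι → Ordinal.{0}) (hι : #ι < Cardinal.lift.{1} c) (hf : ∀ i, f i < c.ord) :
    ∃ b, b < c.ord ∧ ∀ i, f i ≤ b := by
  obtain ⟨c', hc', hc'e⟩ := Cardinal.lt_lift_iff.mp hι
  have e : ι ≃ ULift.{1} c'.out := by
    apply Classical.choice
    rw [← Cardinal.eq, Cardinal.mk_uLift, Cardinal.mk_out]
    exact hc'e.symm
  set g : c'.out → Ordinal.{0} := fun x => f (e.symm ⟨x⟩) with hg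
  have hgs : iSup g < c.ord := by
    refine Ordinal.iSup_lt_ord ?_ fun i => hf _
    rwa [Cardinal.mk_out, hreg.cof_eq]
  refine ⟨iSup g, hgs, fun i => ?_⟩
  have : f i = g ((e i).down) := by
    simp only [hg]
    congr 1
    exact (e.symm_apply_apply i).symm
  rw [this]
  exact Ordinal.le_iSup g _

/-- Extend a condition into a dense open set. -/
lemma dense_open_ext {D : Set (GenCantor κ)} (hO : IsOpenK κ D) (hDe : IsDenseK κ D)
    {ℓ : Ordinal} (hℓ : ℓ < κ.ord) (z : GenCantor κ) :
    ∃ ℓ' z', ℓ ≤ ℓ' ∧ ℓ' < κ.ord ∧ (∀ β : Idx κ, β.1 < ℓ → z' β = z β) ∧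
      Cyl κ ℓ' z' ⊆ D := by
  obtain ⟨y, hy1, hy2⟩ := hDe ℓ hℓ (fun o => if h : o < κ.ord then z ⟨o, h⟩ else false)
  obtain ⟨δ', hδ', hsub⟩ := hO y hy2
  have hyz : ∀ β : Idx κ, β.1 < ℓ → y β = z β := by
    intro β hβ
    refine (hy1 β hβ).trans ?_
    show (if h : (β : Ordinal) < κ.ord then z ⟨β.1, h⟩ else false) = z β
    rw [dif_pos (show (β : Ordinal) < κ.ord from β.2), Subtype.coe_eta]
  refine ⟨max ℓ δ', y, le_max_left _ _, max_lt hℓ hδ', hyz, fun y' hy' => ?_⟩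
  exact hsub fun β hβ => hy' β (lt_of_lt_of_le hβ (le_max_right _ _))

lemma glue_family {ι : Type 1} (hreg : κ.IsRegular) (F : ι → Ordinal × GenCantor κ)
    (hsmall : #ι < Cardinal.lift.{1} κ) (hlen : ∀ i, (F i).1 < κ.ord)
    (hcoh : ∀ i j, ∀ β : Idx κ, β.1 < (F i).1 → β.1 < (F j).1 → (F i).2 β = (F j).2 β) :
    ∃ (b : Ordinal) (z : GenCantor κ), b < κ.ord ∧ (∀ i, (F i).1 ≤ b) ∧
      ∀ i, ∀ β : Idx κ, β.1 < (F i).1 → z β = (F i).2 β := by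
  classical
  obtain ⟨b, hb, hble⟩ := bdd_of_small hreg (fun i => (F i).1) hsmall hlen
  set z : GenCantor κ := fun β => if h : ∃ i, β.1 < (F i).1 then (F h.choose).2 β else false
    with hz
  refine ⟨b, z, hb, hble, fun i β hβ => ?_⟩
  have h : ∃ j, β.1 < (F j).1 := ⟨i, hβ⟩
  rw [hz]
  simp only [dif_pos h]
  exact hcoh h.choose i β h.choose_spec hβ

lemma baire {ι : Type 1} (hreg : κ.IsRegular) (hι : #ι < Cardinal.lift.{1} κ)
    (D : ι → Set (GenCantor κ)) (hO : ∀ i, IsOpenK κ (D i)) (hDe : ∀ i, IsDenseK κ (D i))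
    {ℓ₀ : Ordinal} (hℓ₀ : ℓ₀ < κ.ord) (z₀ : GenCantor κ) :
    ∃ (ℓ : Ordinal) (z : GenCantor κ), ℓ₀ ≤ ℓ ∧ ℓ < κ.ord ∧
      (∀ β : Idx κ, β.1 < ℓ₀ → z β = z₀ β) ∧ ∀ i, Cyl κ ℓ z ⊆ D i := by
  classical
  have hℵκ : ℵ₀ ≤ Cardinal.lift.{1} κ := Cardinal.aleph0_le_lift.mpr hreg.aleph0_le
  let r : ι → ι → Prop := WellOrderingRel
  have wf : WellFounded r := (IsWellFounded.wf : WellFounded (@WellOrderingRel ι))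
  let S : ∀ _ : ι, (∀ j : ι, Ordinal × GenCantor κ) → Set (Ordinal × GenCantor κ) :=
    fun i prev =>
      { c | ℓ₀ ≤ c.1 ∧ c.1 < κ.ord ∧ (∀ β : Idx κ, β.1 < ℓ₀ → c.2 β = z₀ β) ∧
          Cyl κ c.1 c.2 ⊆ D i ∧
          ∀ j : ι, r j i → (prev j).1 ≤ c.1 ∧
            ∀ β : Idx κ, β.1 < (prev j).1 → c.2 β = (prev j).2 β }
  let F : ι → Ordinal × GenCantor κ :=
    wf.fix (fun i prev =>
      if h : (S i (fun j => if hj : r j i then prev j hj else (ℓ₀, z₀))).Nonempty then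
        h.choose else (ℓ₀, z₀))
  have hFeq : ∀ i, F i =
      if h : (S i (fun j => if _ : r j i then F j else (ℓ₀, z₀))).Nonempty then
        h.choose else (ℓ₀, z₀) := fun i => wf.fix_eq _ i
  have hSmem : ∀ i (prev prev' : ι → Ordinal × GenCantor κ),
      (∀ j, r j i → prev j = prev' j) → ∀ c, c ∈ S i prev → c ∈ S i prev' := by
    intro i prev prev' hp c hc
    refine ⟨hc.1, hc.2.1, hc.2.2.1, hc.2.2.2.1, fun j hj => ?_⟩
    rw [← hp j hj]
    exact hc.2.2.2.2 j hj
  have coh2 : ∀ jA jB, F jA ∈ S jA F → F jB ∈ S jB F →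
      ∀ β : Idx κ, β.1 < (F jA).1 → β.1 < (F jB).1 → (F jA).2 β = (F jB).2 β := by
    intro jA jB hA hB β h1 h2
    rcases trichotomous_of r jA jB with h | h | h
    · exact ((hB.2.2.2.2 jA h).2 β h1).symm
    · subst h; rfl
    · exact (hA.2.2.2.2 jB h).2 β h2
  have key : ∀ i, F i ∈ S i F := by
    intro i
    refine wf.induction (C := fun i => F i ∈ S i F) i ?_
    intro i IH
    have hne : (S i (fun j => if _ : r j i then F j else (ℓ₀, z₀))).Nonempty := by
      set G : Option {j // r j i} → Ordinal × GenCantor κ :=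
        fun o => Option.elim o (ℓ₀, z₀) (fun j => F j.1) with hG
      have hGsmall : #(Option {j // r j i}) < Cardinal.lift.{1} κ := by
        rw [Cardinal.mk_option]
        exact Cardinal.add_lt_of_lt hℵκ (lt_of_le_of_lt (Cardinal.mk_subtype_le _) hι)
          (lt_of_lt_of_le Cardinal.one_lt_aleph0 hℵκ)
      have hGlen : ∀ o, (G o).1 < κ.ord := by
        rintro (_ | j)
        · exact hℓ₀
        · exact (IH j.1 j.2).2.1
      have hGcoh : ∀ o o', ∀ β : Idx κ, β.1 < (G o).1 → β.1 < (G o').1 →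
          (G o).2 β = (G o').2 β := by
        rintro (_ | j) (_ | j') β h1 h2
        · rfl
        · exact ((IH j'.1 j'.2).2.2.1 β h1).symm
        · exact (IH j.1 j.2).2.2.1 β h2
        · exact coh2 j.1 j'.1 (IH j.1 j.2) (IH j'.1 j'.2) β h1 h2
      obtain ⟨b, zb, hb, hble, hbag⟩ := glue_family hreg G hGsmall hGlen hGcoh
      obtain ⟨ℓ', z', hle', hℓ', hag', hsub'⟩ := dense_open_ext (hO i) (hDe i) hb zb
      refine ⟨(ℓ', z'), le_trans (hble none) hle', hℓ', ?_, hsub', ?_⟩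
      · intro β hβ
        exact (hag' β (lt_of_lt_of_le hβ (hble none))).trans (hbag none β hβ)
      · intro j hj
        simp only [dif_pos hj]
        have h1 : (F j).1 ≤ b := hble (some ⟨j, hj⟩)
        refine ⟨le_trans h1 hle', fun β hβ => ?_⟩
        exact (hag' β (lt_of_lt_of_le hβ h1)).trans (hbag (some ⟨j, hj⟩) β hβ)
    have : F i ∈ S i (fun j => if _ : r j i then F j else (ℓ₀, z₀)) := by
      rw [hFeq i, dif_pos hne]
      exact hne.choose_spec
    exact hSmem i _ F (fun j hj => by rw [dif_pos hj]) _ this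
  set G : Option ι → Ordinal × GenCantor κ := fun o => Option.elim o (ℓ₀, z₀) F with hG
  have hGsmall : #(Option ι) < Cardinal.lift.{1} κ := by
    rw [Cardinal.mk_option]
    exact Cardinal.add_lt_of_lt hℵκ hι (lt_of_lt_of_le Cardinal.one_lt_aleph0 hℵκ)
  have hGlen : ∀ o, (G o).1 < κ.ord := by
    rintro (_ | j)
    · exact hℓ₀
    · exact (key j).2.1
  have hGcoh : ∀ o o', ∀ β : Idx κ, β.1 < (G o).1 → β.1 < (G o').1 →
      (G o).2 β = (G o').2 β := by
    rintro (_ | j) (_ | j') β h1 h2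
    · rfl
    · exact ((key j').2.2.1 β h1).symm
    · exact (key j).2.2.1 β h2
    · exact coh2 j j' (key j) (key j') β h1 h2
  obtain ⟨b, zb, hb, hble, hbag⟩ := glue_family hreg G hGsmall hGlen hGcoh
  refine ⟨b, zb, hble none, hb, fun β hβ => hbag none β hβ, fun i => ?_⟩
  refine subset_trans (Cyl_mono (hble (some i)) ?_) (key i).2.2.2.1
  intro β hβ
  exact hbag (some i) β hβ

lemma two_power_lift_lt {κ : Cardinal.{0}} (hsl : κ.IsStrongLimit) {x : Cardinal.{1}}
    (hx : x < Cardinal.lift.{1} κ) : (2 : Cardinal.{1}) ^ x < Cardinal.lift.{1} κ := by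
  obtain ⟨x₀, hx₀, rfl⟩ := Cardinal.lt_lift_iff.mp hx
  have : (2 : Cardinal.{1}) ^ Cardinal.lift.{1} x₀ = Cardinal.lift.{1} (2 ^ x₀) := by
    rw [Cardinal.lift_power, Cardinal.lift_two]
  rw [this, Cardinal.lift_lt]
  exact hsl.two_power_lt hx₀

lemma univ_pattern (hreg : κ.IsRegular) (hsl : κ.IsStrongLimit)
    {D : Set (GenCantor κ)} (hO : IsOpenK κ D) (hDe : IsDenseK κ D)
    {δ : Ordinal} (hδ : δ < κ.ord) :
    ∃ (e : Ordinal) (u : GenCantor κ), δ ≤ e ∧ e < κ.ord ∧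
      ∀ y : GenCantor κ, (∀ β : Idx κ, δ ≤ β.1 → β.1 < e → y β = u β) → y ∈ D := by
  classical
  set ι := ({β : Idx κ // β.1 < δ} → Bool) with hι
  have hsmall : #ι < Cardinal.lift.{1} κ := by
    have e1 : {β : Idx κ // β.1 < δ} ≃ ↥(Iio δ) :=
      { toFun := fun b => ⟨b.1.1, b.2⟩
        invFun := fun o => ⟨⟨o.1, lt_trans o.2 hδ⟩, o.2⟩
        left_inv := fun b => by ext; rfl
        right_inv := fun o => rfl }
    have h2 : #ι = (2 : Cardinal.{1}) ^ #(↥(Iio δ)) := by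
      rw [hι, Cardinal.mk_arrow, Cardinal.mk_bool, Cardinal.lift_two, Cardinal.lift_id',
        Cardinal.mk_congr e1]
    rw [h2, Ordinal.mk_Iio_ordinal]
    exact two_power_lift_lt hsl (by rw [Cardinal.lift_lt]; exact (Cardinal.lt_ord.mp hδ))
  set sub : ι → GenCantor κ → GenCantor κ :=
    fun t y β => if h : β.1 < δ then t ⟨β, h⟩ else y β with hsubdef
  have hOt : ∀ t, IsOpenK κ (sub t ⁻¹' D) := by
    intro t y hy
    obtain ⟨δ', hδ', hs⟩ := hO (sub t y) hy
    refine ⟨max δ δ', max_lt hδ hδ', fun y' hy' => ?_⟩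
    have : ∀ β : Idx κ, β.1 < δ' → sub t y' β = sub t y β := by
      intro β hβ
      show (if h : (β : Ordinal) < δ then t ⟨β, h⟩ else y' β)
        = (if h : (β : Ordinal) < δ then t ⟨β, h⟩ else y β)
      by_cases h : (β : Ordinal) < δ
      · rw [dif_pos h, dif_pos h]
      · rw [dif_neg h, dif_neg h]
        exact hy' β (lt_of_lt_of_le hβ (le_max_right _ _))
    exact hs this
  have hDet : ∀ t, IsDenseK κ (sub t ⁻¹' D) := by
    intro t ℓ₁ hℓ₁ σ
    obtain ⟨z, hz1, hz2⟩ := hDe (max δ ℓ₁) (max_lt hδ hℓ₁)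
      (fun o => if h : o < δ then t ⟨⟨o, lt_trans h hδ⟩, h⟩ else σ o)
    have hz1' : ∀ β : Idx κ, β.1 < max δ ℓ₁ →
        z β = if h : (β : Ordinal) < δ then t ⟨⟨β.1, lt_trans h hδ⟩, h⟩ else σ β.1 :=
      fun β hβ => hz1 β hβ
    set w : GenCantor κ := fun β => if (β : Ordinal) < δ then σ β.1 else z β with hw
    refine ⟨w, ?_, ?_⟩
    · intro β hβ
      show (if (β : Ordinal) < δ then σ β.1 else z β) = σ β.1
      by_cases h : (β : Ordinal) < δ
      · rw [if_pos h]
      · rw [if_neg h]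
        have h3 := hz1' β (lt_of_lt_of_le hβ (le_max_right _ _))
        rwa [dif_neg h] at h3
    · show sub t w ∈ D
      have : sub t w = z := by
        funext β
        show (if h : (β : Ordinal) < δ then t ⟨β, h⟩
          else if (β : Ordinal) < δ then σ β.1 else z β) = z β
        by_cases h : (β : Ordinal) < δ
        · rw [dif_pos h]
          have h3 := hz1' β (lt_of_lt_of_le h (le_max_left _ _))
          rw [dif_pos h] at h3
          rw [h3]
        · rw [dif_neg h, if_neg h]
      rw [this]
      exact hz2
  obtain ⟨e, z, hle, he, _, hsub⟩ := baire hreg hsmall _ hOt hDet hδ (fun _ => false)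
  refine ⟨e, z, hle, he, fun y hy => ?_⟩
  have hw : (fun β : Idx κ => if (β : Ordinal) < δ then z β else y β) ∈ Cyl κ e z := by
    intro β hβ
    show (if (β : Ordinal) < δ then z β else y β) = z β
    by_cases h : (β : Ordinal) < δ
    · rw [if_pos h]
    · rw [if_neg h]
      exact hy β (not_lt.mp h) hβ
  have hmem := hsub (fun b => y b.1) hw
  have heq : sub (fun b => y b.1) (fun β : Idx κ => if (β : Ordinal) < δ then z β else y β)
      = y := by
    funext β
    show (if _ : (β : Ordinal) < δ then y β
      else if (β : Ordinal) < δ then z β else y β) = y β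
    by_cases h : (β : Ordinal) < δ
    · rw [dif_pos h]
    · rw [dif_neg h, if_neg h]
  rw [Set.mem_preimage, heq] at hmem
  exact hmem

end Helpers

section Fam

variable (κ μ : Cardinal.{0})

/-- Parameter space for the family `𝒴`. -/
def PS : Type 1 :=
  Σ B : ↥(Iio κ.ord), (↥(Iio μ.ord) → ↥(Iio B.1) × ↥(Iio B.1)) × (↥(Iio B.1) → Bool)

variable {κ μ}

def psd (p : PS κ μ) (ν : ↥(Iio μ.ord)) : Ordinal := ((p.2.1 ν).1).1

def pse (p : PS κ μ) (ν : ↥(Iio μ.ord)) : Ordinal := ((p.2.1 ν).2).1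

noncomputable def psu (p : PS κ μ) : GenCantor κ := fun β =>
  if h : β.1 < p.1.1 then p.2.2 ⟨β.1, h⟩ else false

def Valid (δ₀ : Ordinal) (p : PS κ μ) : Prop :=
  (∀ ν, δ₀ ≤ psd p ν) ∧ (∀ ν, psd p ν < pse p ν) ∧
    ∀ ν ν' : ↥(Iio μ.ord), ν.1 < ν'.1 → pse p ν ≤ psd p ν'

def Yof (δ₀ : Ordinal) (x₀ : GenCantor κ) (p : PS κ μ) : Set (GenCantor κ) :=
  Cyl κ δ₀ x₀ ∩ ⋃ ν : ↥(Iio μ.ord),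
    { y | ∀ β : Idx κ, psd p ν ≤ β.1 → β.1 < pse p ν → y β = psu p β }

lemma psd_lt_B (p : PS κ μ) (ν) : psd p ν < p.1.1 := ((p.2.1 ν).1).2

lemma pse_lt_B (p : PS κ μ) (ν) : pse p ν < p.1.1 := ((p.2.1 ν).2).2

lemma psd_lt_ord (p : PS κ μ) (ν) : psd p ν < κ.ord := lt_trans (psd_lt_B p ν) p.1.2

lemma pse_lt_ord (p : PS κ μ) (ν) : pse p ν < κ.ord := lt_trans (pse_lt_B p ν) p.1.2

lemma psd_mono {δ₀ : Ordinal} {p : PS κ μ} (hV : Valid δ₀ p) {ν ν' : ↥(Iio μ.ord)}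
    (h : ν.1 ≤ ν'.1) : psd p ν ≤ psd p ν' := by
  rcases h.lt_or_eq with h | h
  · exact le_of_lt (lt_of_lt_of_le (hV.2.1 ν) (hV.2.2 ν ν' h))
  · have : ν = ν' := Subtype.ext h
    rw [this]

end Fam


theorem main_lemma_open_family (κ : Cardinal.{0}) (hinacc : κ.IsInaccessible)
    (X : Set (GenCantor κ)) (hX : IsOpenK κ X) (hne : X.Nonempty)
    (lam : Cardinal.{0}) (hlam : lam < κ) :
    ∃ 𝒴 : Set (Set (GenCantor κ)),
      (∀ Y ∈ 𝒴, IsOpenK κ Y ∧ Y ⊆ X) ∧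
      #𝒴 ≤ Cardinal.lift.{1} κ ∧
      (∀ D : Set (GenCantor κ), IsOpenK κ D → IsDenseK κ D → ∃ Y ∈ 𝒴, Y ⊆ D) ∧
      (∀ 𝒴' ⊆ 𝒴, #𝒴' ≤ Cardinal.lift.{1} lam → (⋂₀ 𝒴').Nonempty) := by
  classical
  have hreg : κ.IsRegular := hinacc.isRegular
  have hsl : κ.IsStrongLimit := hinacc.isStrongLimit
  obtain ⟨hℵκ', _, _⟩ := hinacc
  have hℵκ : ℵ₀ ≤ κ := le_of_lt hℵκ'
  have hℵlκ : ℵ₀ ≤ Cardinal.lift.{1} κ := Cardinal.aleph0_le_lift.mpr hℵκ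
  have hκlim : Order.IsSuccLimit κ.ord := Cardinal.isSuccLimit_ord hℵκ
  obtain ⟨x₀, hx₀⟩ := hne
  obtain ⟨δ₀, hδ₀, hC₀⟩ := hX x₀ hx₀
  have hC₀' : Cyl κ δ₀ x₀ ⊆ X := hC₀
  set μ : Cardinal.{0} := Order.succ (max lam ℵ₀) with hμdef
  have hμreg : μ.IsRegular := Cardinal.isRegular_succ (le_max_right lam ℵ₀)
  have hℵμ : ℵ₀ ≤ μ := le_of_lt (lt_of_le_of_lt (le_max_right lam ℵ₀) (Order.lt_succ _))
  have hμκ : μ < κ :=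
    lt_of_le_of_lt (Order.succ_le_of_lt (Cardinal.cantor _))
      (hsl.two_power_lt (max_lt hlam hℵκ'))
  have hlamμ : lam < μ := lt_of_le_of_lt (le_max_left lam ℵ₀) (Order.lt_succ _)
  have hμlim : Order.IsSuccLimit μ.ord := Cardinal.isSuccLimit_ord hℵμ
  have hliftμ : #(↥(Iio μ.ord)) = Cardinal.lift.{1} μ := by
    rw [Ordinal.mk_Iio_ordinal, Cardinal.card_ord]
  have hliftμκ : #(↥(Iio μ.ord)) < Cardinal.lift.{1} κ := by
    rw [hliftμ, Cardinal.lift_lt]; exact hμκ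
  -- successor inside `Iio μ.ord`
  have hsuccμ : ∀ ν : ↥(Iio μ.ord), Order.succ ν.1 < μ.ord := fun ν => hμlim.succ_lt ν.2
  refine ⟨{Y | ∃ p : PS κ μ, Valid δ₀ p ∧ Y = Yof δ₀ x₀ p}, ?_, ?_, ?_, ?_⟩
  · -- (i) open and subset of X
    rintro Y ⟨p, hV, rfl⟩
    constructor
    · rintro y ⟨hyC, hyU⟩
      rw [Set.mem_iUnion] at hyU
      obtain ⟨ν, hν⟩ := hyU
      refine ⟨max δ₀ (pse p ν), max_lt hδ₀ (pse_lt_ord p ν), fun y' hy' => ?_⟩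
      refine ⟨fun β hβ => ?_, Set.mem_iUnion.mpr ⟨ν, fun β h1 h2 => ?_⟩⟩
      · exact (hy' β (lt_of_lt_of_le hβ (le_max_left _ _))).trans (hyC β hβ)
      · exact (hy' β (lt_of_lt_of_le h2 (le_max_right _ _))).trans (hν β h1 h2)
    · exact fun y hy => hC₀' hy.1
  · -- (ii) cardinality
    have h1 : {Y | ∃ p : PS κ μ, Valid δ₀ p ∧ Y = Yof δ₀ x₀ p} ⊆
        Set.range (fun p : PS κ μ => Yof δ₀ x₀ p) := by
      rintro Y ⟨p, _, rfl⟩; exact ⟨p, rfl⟩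
    refine le_trans (Cardinal.mk_le_mk_of_subset h1) (le_trans Cardinal.mk_range_le ?_)
    have hPS : #(PS κ μ) = Cardinal.sum (fun B : ↥(Iio κ.ord) =>
        #((↥(Iio μ.ord) → ↥(Iio B.1) × ↥(Iio B.1)) × (↥(Iio B.1) → Bool))) :=
      Cardinal.mk_sigma _
    have hsummand : ∀ B : ↥(Iio κ.ord),
        #((↥(Iio μ.ord) → ↥(Iio B.1) × ↥(Iio B.1)) × (↥(Iio B.1) → Bool)) ≤
          Cardinal.lift.{1} κ := by
      intro B
      have hBc : #(↥(Iio B.1)) < Cardinal.lift.{1} κ := by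
        rw [Ordinal.mk_Iio_ordinal, Cardinal.lift_lt]
        exact Cardinal.lt_ord.mp B.2
      have hx : #(↥(Iio B.1) × ↥(Iio B.1)) < Cardinal.lift.{1} κ := by
        rw [show #(↥(Iio B.1) × ↥(Iio B.1)) = #(↥(Iio B.1)) * #(↥(Iio B.1)) by simp]
        exact Cardinal.mul_lt_of_lt hℵlκ hBc hBc
      have hpow : #(↥(Iio μ.ord) → ↥(Iio B.1) × ↥(Iio B.1)) < Cardinal.lift.{1} κ := by
        rw [← Cardinal.power_def]
        calc #(↥(Iio B.1) × ↥(Iio B.1)) ^ #(↥(Iio μ.ord))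
            ≤ (2 ^ #(↥(Iio B.1) × ↥(Iio B.1))) ^ #(↥(Iio μ.ord)) :=
              Cardinal.power_le_power_right (le_of_lt (Cardinal.cantor _))
          _ = 2 ^ (#(↥(Iio B.1) × ↥(Iio B.1)) * #(↥(Iio μ.ord))) :=
              (Cardinal.power_mul).symm
          _ < Cardinal.lift.{1} κ :=
              two_power_lift_lt hsl (Cardinal.mul_lt_of_lt hℵlκ hx hliftμκ)
      have hbool : #(↥(Iio B.1) → Bool) < Cardinal.lift.{1} κ := by
        rw [show #(↥(Iio B.1) → Bool) = (2 : Cardinal.{1}) ^ #(↥(Iio B.1)) by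
          rw [Cardinal.mk_arrow, Cardinal.mk_bool, Cardinal.lift_two, Cardinal.lift_id']]
        exact two_power_lift_lt hsl hBc
      rw [show #((↥(Iio μ.ord) → ↥(Iio B.1) × ↥(Iio B.1)) × (↥(Iio B.1) → Bool)) =
        #(↥(Iio μ.ord) → ↥(Iio B.1) × ↥(Iio B.1)) * #(↥(Iio B.1) → Bool) by simp]
      exact le_of_lt (Cardinal.mul_lt_of_lt hℵlκ hpow hbool)
    calc #(PS κ μ) = _ := hPS
      _ ≤ Cardinal.sum (fun _ : ↥(Iio κ.ord) => Cardinal.lift.{1} κ) :=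
          Cardinal.sum_le_sum _ _ hsummand
      _ = #(↥(Iio κ.ord)) * Cardinal.lift.{1} κ := Cardinal.sum_const' _ _
      _ = Cardinal.lift.{1} κ * Cardinal.lift.{1} κ := by
          rw [Ordinal.mk_Iio_ordinal, Cardinal.card_ord]
      _ = Cardinal.lift.{1} κ := Cardinal.mul_eq_self hℵlκ
  · -- (iii) capture of dense open sets
    intro D hDo hDd
    set rel : ↥(Iio μ.ord) → ↥(Iio μ.ord) → Prop := InvImage (· < ·) Subtype.val with hrel
    have wfμ : WellFounded rel := InvImage.wf _ Ordinal.lt_wf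
    set junk : Ordinal × Ordinal × GenCantor κ := (δ₀, δ₀, fun _ => false) with hjunk
    set SB : ↥(Iio μ.ord) → (↥(Iio μ.ord) → Ordinal × Ordinal × GenCantor κ) →
        Set (Ordinal × Ordinal × GenCantor κ) := fun ν prev =>
      { c | δ₀ ≤ c.1 ∧ c.1 < c.2.1 ∧ c.2.1 < κ.ord ∧
          (∀ ξ : ↥(Iio μ.ord), rel ξ ν → (prev ξ).2.1 ≤ c.1) ∧
          ∀ y : GenCantor κ, (∀ β : Idx κ, c.1 ≤ β.1 → β.1 < c.2.1 → y β = c.2.2 β) →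
            y ∈ D } with hSB
    set G : ↥(Iio μ.ord) → Ordinal × Ordinal × GenCantor κ :=
      wfμ.fix (fun ν prev =>
        if h : (SB ν (fun ξ => if hξ : rel ξ ν then prev ξ hξ else junk)).Nonempty then
          h.choose else junk) with hGdef
    have hGeq : ∀ ν, G ν =
        if h : (SB ν (fun ξ => if _ : rel ξ ν then G ξ else junk)).Nonempty then
          h.choose else junk := fun ν => wfμ.fix_eq _ ν
    have hSBmem : ∀ ν (prev prev' : ↥(Iio μ.ord) → Ordinal × Ordinal × GenCantor κ),
        (∀ ξ, rel ξ ν → prev ξ = prev' ξ) → ∀ c, c ∈ SB ν prev → c ∈ SB ν prev' := by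
      intro ν prev prev' hp c hc
      refine ⟨hc.1, hc.2.1, hc.2.2.1, fun ξ hξ => ?_, hc.2.2.2.2⟩
      rw [← hp ξ hξ]
      exact hc.2.2.2.1 ξ hξ
    have keyB : ∀ ν, G ν ∈ SB ν G := by
      intro ν
      refine wfμ.induction (C := fun ν => G ν ∈ SB ν G) ν ?_
      intro ν IH
      have hne : (SB ν (fun ξ => if _ : rel ξ ν then G ξ else junk)).Nonempty := by
        obtain ⟨b, hb, hble⟩ := bdd_of_small hreg
          (fun ξ : {ξ : ↥(Iio μ.ord) // rel ξ ν} => (G ξ.1).2.1)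
          (lt_of_le_of_lt (Cardinal.mk_subtype_le _) hliftμκ)
          (fun ξ => (IH ξ.1 ξ.2).2.2.1)
        set d : Ordinal := Order.succ (max δ₀ b) with hd
        have hdκ : d < κ.ord := hκlim.succ_lt (max_lt hδ₀ hb)
        obtain ⟨e0, u, hde, he0, hu⟩ := univ_pattern hreg hsl hDo hDd hdκ
        refine ⟨(d, max (Order.succ d) e0, u), le_trans (le_max_left δ₀ b) (Order.le_succ _),
          lt_of_lt_of_le (Order.lt_succ d) (le_max_left _ _),
          max_lt (hκlim.succ_lt hdκ) he0, fun ξ hξ => ?_, fun y hy => ?_⟩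
        · simp only [dif_pos hξ]
          exact le_trans (le_trans (hble ⟨ξ, hξ⟩) (le_max_right δ₀ b)) (Order.le_succ _)
        · exact hu y (fun β h1 h2 => hy β h1 (lt_of_lt_of_le h2 (le_max_right _ _)))
      have hmm : G ν ∈ SB ν (fun ξ => if _ : rel ξ ν then G ξ else junk) := by
        rw [hGeq ν, dif_pos hne]
        exact hne.choose_spec
      exact hSBmem ν _ G (fun ξ hξ => by rw [dif_pos hξ]) _ hmm
    obtain ⟨b2, hb2, hble2⟩ := bdd_of_small hreg (fun ν : ↥(Iio μ.ord) => (G ν).2.1)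
      hliftμκ (fun ν => (keyB ν).2.2.1)
    set B : Ordinal := Order.succ b2 with hBdef
    have hBκ : B < κ.ord := hκlim.succ_lt hb2
    have hdB : ∀ ν, (G ν).1 < B :=
      fun ν => lt_of_lt_of_le (lt_of_lt_of_le (keyB ν).2.1 (hble2 ν)) (Order.le_succ _)
    have heB : ∀ ν, (G ν).2.1 < B :=
      fun ν => lt_of_le_of_lt (hble2 ν) (Order.lt_succ _)
    set p : PS κ μ := ⟨⟨B, hBκ⟩,
      (fun ν => (⟨(G ν).1, hdB ν⟩, ⟨(G ν).2.1, heB ν⟩),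
       fun b => if h : ∃ ν : ↥(Iio μ.ord), (G ν).1 ≤ b.1 ∧ b.1 < (G ν).2.1 then
          (G h.choose).2.2 ⟨b.1, lt_trans b.2 hBκ⟩ else false)⟩ with hp
    have hpd : ∀ ν, psd p ν = (G ν).1 := fun ν => rfl
    have hpe : ∀ ν, pse p ν = (G ν).2.1 := fun ν => rfl
    have hV : Valid δ₀ p := by
      refine ⟨fun ν => (keyB ν).1, fun ν => (keyB ν).2.1, fun ν ν' h => ?_⟩
      exact (keyB ν').2.2.2.1 ν h
    refine ⟨Yof δ₀ x₀ p, ⟨p, hV, rfl⟩, ?_⟩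
    rintro y ⟨hyC, hyU⟩
    rw [Set.mem_iUnion] at hyU
    obtain ⟨ν, hν⟩ := hyU
    refine (keyB ν).2.2.2.2 y (fun β h1 h2 => ?_)
    have hval := hν β h1 h2
    rw [hval]
    -- now show psu p β = (G ν).2.2 β
    have hβB : β.1 < p.1.1 := lt_trans h2 (heB ν)
    show (if h : β.1 < p.1.1 then p.2.2 ⟨β.1, h⟩ else false) = (G ν).2.2 β
    rw [dif_pos hβB]
    show (if h : ∃ ν' : ↥(Iio μ.ord), (G ν').1 ≤ β.1 ∧ β.1 < (G ν').2.1 then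
        (G h.choose).2.2 ⟨β.1, lt_trans hβB hBκ⟩ else false) = (G ν).2.2 β
    have hex : ∃ ν' : ↥(Iio μ.ord), (G ν').1 ≤ β.1 ∧ β.1 < (G ν').2.1 := ⟨ν, h1, h2⟩
    rw [dif_pos hex]
    have hspec := hex.choose_spec
    have hνeq : hex.choose = ν := by
      by_contra hne'
      rcases lt_trichotomy hex.choose.1 ν.1 with hlt | heq | hgt
      · exact absurd (lt_of_le_of_lt (le_trans ((keyB ν).2.2.2.1 hex.choose hlt) h1)
          hspec.2) (lt_irrefl _)
      · exact hne' (Subtype.ext heq)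
      · exact absurd (lt_of_le_of_lt (le_trans ((keyB hex.choose).2.2.2.1 ν hgt)
          hspec.1) h2) (lt_irrefl _)
    rw [hνeq]
  · -- (iv) small intersections
    intro Ys hYs hYscard
    have ν₀ : ↥(Iio μ.ord) := ⟨0, hμlim.pos⟩
    -- choose parameters
    have hPmem : ∀ t : ↥Ys, ∃ p : PS κ μ, Valid δ₀ p ∧ t.1 = Yof δ₀ x₀ p := fun t => hYs t.2
    set pp : ↥Ys → PS κ μ := fun t => (hPmem t).choose with hppdef
    have hppV : ∀ t, Valid δ₀ (pp t) := fun t => (hPmem t).choose_spec.1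
    have hppY : ∀ t, t.1 = Yof δ₀ x₀ (pp t) := fun t => (hPmem t).choose_spec.2
    set s : ↥Ys → Ordinal := fun t => sSup (Set.range (fun ν => psd (pp t) ν)) with hsdef
    have hbddr : ∀ t, BddAbove (Set.range (fun ν => psd (pp t) ν)) := by
      intro t
      refine ⟨κ.ord, ?_⟩
      rintro o ⟨ν, rfl⟩
      exact le_of_lt (psd_lt_ord (pp t) ν)
    have hdlts : ∀ t ν, psd (pp t) ν < s t := by
      intro t ν
      have hsucc : psd (pp t) ν < psd (pp t) ⟨Order.succ ν.1, hsuccμ ν⟩ :=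
        lt_of_lt_of_le ((hppV t).2.1 ν) ((hppV t).2.2 ν _ (Order.lt_succ ν.1))
      exact lt_of_lt_of_le hsucc (le_csSup (hbddr t) ⟨_, rfl⟩)
    have helts : ∀ t ν, pse (pp t) ν < s t := by
      intro t ν
      exact lt_of_le_of_lt ((hppV t).2.2 ν ⟨Order.succ ν.1, hsuccμ ν⟩ (Order.lt_succ ν.1))
        (hdlts t _)
    have hK2 : ∀ t b, b < s t → ∃ ν, b < psd (pp t) ν := by
      intro t b hb
      have hner : (Set.range fun ν => psd (pp t) ν).Nonempty := ⟨psd (pp t) ν₀, ⟨ν₀, rfl⟩⟩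
      obtain ⟨o, ⟨ν, rfl⟩, h⟩ := exists_lt_of_lt_csSup hner hb
      exact ⟨ν, h⟩
    -- well-founded order on Ys
    set rel : ↥Ys → ↥Ys → Prop :=
      InvImage (Prod.Lex (· < ·) WellOrderingRel) (fun t => (s t, t)) with hreldef
    have wfr : WellFounded rel :=
      InvImage.wf _ (WellFounded.prod_lex Ordinal.lt_wf IsWellFounded.wf)
    have hrel_le : ∀ {t t'}, rel t' t → s t' ≤ s t := by
      intro t t' h
      rcases (Prod.lex_def).mp h with h | h
      · exact le_of_lt h
      · exact le_of_eq h.1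
    have htot : ∀ t t' : ↥Ys, t ≠ t' → rel t t' ∨ rel t' t := by
      intro t t' hne'
      rcases lt_trichotomy (s t) (s t') with h | h | h
      · exact Or.inl ((Prod.lex_def).mpr (Or.inl h))
      · rcases trichotomous_of WellOrderingRel t t' with hw | hw | hw
        · exact Or.inl ((Prod.lex_def).mpr (Or.inr ⟨h, hw⟩))
        · exact absurd hw hne'
        · exact Or.inr ((Prod.lex_def).mpr (Or.inr ⟨h.symm, hw⟩))
      · exact Or.inr ((Prod.lex_def).mpr (Or.inl h))
    -- selection recursion
    set SC : ↥Ys → (↥Ys → ↥(Iio μ.ord)) → Set (↥(Iio μ.ord)) := fun t prev =>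
      { ν | ∀ t', rel t' t → pse (pp t') (prev t') ≤ psd (pp t) ν } with hSC
    set Fs : ↥Ys → ↥(Iio μ.ord) := wfr.fix (fun t prev =>
      if h : (SC t (fun t' => if h' : rel t' t then prev t' h' else ν₀)).Nonempty then
        h.choose else ν₀) with hFs
    have hFseq : ∀ t, Fs t =
        if h : (SC t (fun t' => if _ : rel t' t then Fs t' else ν₀)).Nonempty then
          h.choose else ν₀ := fun t => wfr.fix_eq _ t
    have hSCmem : ∀ t (prev prev' : ↥Ys → ↥(Iio μ.ord)),
        (∀ t', rel t' t → prev t' = prev' t') → ∀ ν, ν ∈ SC t prev → ν ∈ SC t prev' := by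
      intro t prev prev' hp ν hν t' ht'
      rw [← hp t' ht']
      exact hν t' ht'
    have keySel : ∀ t, Fs t ∈ SC t Fs := by
      intro t
      refine wfr.induction (C := fun t => Fs t ∈ SC t Fs) t ?_
      intro t IH
      have hne : (SC t (fun t' => if _ : rel t' t then Fs t' else ν₀)).Nonempty := by
        -- pick indices dominating all earlier tops
        have hch : ∀ t' : {t' // rel t' t}, ∃ ν, pse (pp t'.1) (Fs t'.1) < psd (pp t) ν :=
          fun t' => hK2 t _ (lt_of_lt_of_le (helts t'.1 (Fs t'.1)) (hrel_le t'.2))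
        obtain ⟨bν, hbν, hbνle⟩ := bdd_of_small hμreg
          (fun t' : {t' // rel t' t} => ((hch t').choose).1)
          (lt_of_le_of_lt (le_trans (Cardinal.mk_subtype_le _) hYscard)
            (Cardinal.lift_lt.mpr hlamμ))
          (fun t' => ((hch t').choose).2)
        refine ⟨⟨bν, hbν⟩, fun t' ht' => ?_⟩
        simp only [dif_pos ht']
        refine le_of_lt (lt_of_lt_of_le ((hch ⟨t', ht'⟩).choose_spec) ?_)
        exact psd_mono (hppV t) (hbνle ⟨t', ht'⟩)
      have hmm : Fs t ∈ SC t (fun t' => if _ : rel t' t then Fs t' else ν₀) := by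
        rw [hFseq t, dif_pos hne]
        exact hne.choose_spec
      exact hSCmem t _ Fs (fun t' ht' => by rw [dif_pos ht']) _ hmm
    -- build the common point
    set y : GenCantor κ := fun β =>
      if h : ∃ t : ↥Ys, psd (pp t) (Fs t) ≤ β.1 ∧ β.1 < pse (pp t) (Fs t) then
        psu (pp h.choose) β else x₀ β with hy
    refine ⟨y, fun Y hY => ?_⟩
    have hYY : Y = Yof δ₀ x₀ (pp ⟨Y, hY⟩) := hppY ⟨Y, hY⟩
    rw [hYY]
    set t : ↥Ys := ⟨Y, hY⟩
    constructor
    · -- in the base cylinder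
      intro β hβ
      show (if h : ∃ t : ↥Ys, psd (pp t) (Fs t) ≤ β.1 ∧ β.1 < pse (pp t) (Fs t) then
        psu (pp h.choose) β else x₀ β) = x₀ β
      have hno : ¬ ∃ t : ↥Ys, psd (pp t) (Fs t) ≤ β.1 ∧ β.1 < pse (pp t) (Fs t) := by
        rintro ⟨t', h1, _⟩
        exact absurd (lt_of_lt_of_le hβ (le_trans ((hppV t').1 (Fs t')) h1)) (lt_irrefl _)
      rw [dif_neg hno]
    · -- in the pattern piece
      refine Set.mem_iUnion.mpr ⟨Fs t, fun β h1 h2 => ?_⟩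
      show (if h : ∃ t' : ↥Ys, psd (pp t') (Fs t') ≤ β.1 ∧ β.1 < pse (pp t') (Fs t') then
        psu (pp h.choose) β else x₀ β) = psu (pp t) β
      have hex : ∃ t' : ↥Ys, psd (pp t') (Fs t') ≤ β.1 ∧ β.1 < pse (pp t') (Fs t') :=
        ⟨t, h1, h2⟩
      rw [dif_pos hex]
      have hspec := hex.choose_spec
      have : hex.choose = t := by
        by_contra hne'
        rcases htot hex.choose t hne' with hr | hr
        · exact absurd (lt_of_le_of_lt (le_trans (keySel t hex.choose hr) h1) hspec.2)
            (lt_irrefl _)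
        · exact absurd (lt_of_le_of_lt (le_trans (keySel hex.choose t hr) hspec.1) h2)
            (lt_irrefl _)
      rw [this]

end GenCichon
end
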